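/- arXiv:1808.03542 — 2 statements merged into one kernel-verified Lean document; each statement's English description precedes it below -/
import Mathlib

section
/- For A ∈ B(X), a point λ ∈ σ(A) is a pole of the resolvent of A if and only if asc(A - λ) = dsc(A - λ) < ∞. -/
open Filter Metric Set Asymptotics Topology

namespace Paper

variable {X : Type*} [NormedAddCommGroup X] [NormedSpace ℂ X] [CompleteSpace X]

/-- The ascent of an operator: the least `n` with `ker Tⁿ = ker Tⁿ⁺¹`, `⊤` if none exists. -/
noncomputable def ascent (T : X →L[ℂ] X) : ℕ∞ :=
  sInf ((↑) '' {n : ℕ | LinearMap.ker ((T ^ n : X →L[ℂ] X) : X →ₗ[ℂ] X) = LinearMap.ker ((T ^ (n + 1) : X →L[ℂ] X) : X →ₗ[ℂ] X)})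

/-- The descent of an operator: the least `n` with `range Tⁿ = range Tⁿ⁺¹`, `⊤` if none exists. -/
noncomputable def descent (T : X →L[ℂ] X) : ℕ∞ :=
  sInf ((↑) '' {n : ℕ | LinearMap.range ((T ^ n : X →L[ℂ] X) : X →ₗ[ℂ] X) = LinearMap.range ((T ^ (n + 1) : X →L[ℂ] X) : X →ₗ[ℂ] X)})

/-- `T` has the single-valued extension property at `z₀`. -/
def HasSVEPAt (T : X →L[ℂ] X) (z₀ : ℂ) : Prop :=
  ∀ r > (0 : ℝ), ∀ f : ℂ → X, AnalyticOnNhd ℂ f (ball z₀ r) →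
    (∀ z ∈ ball z₀ r, T (f z) - z • f z = 0) → ∀ z ∈ ball z₀ r, f z = 0

/-- The approximate point spectrum: points where `T - z` is not bounded below. -/
def aspectrum (T : X →L[ℂ] X) : Set ℂ :=
  {z | ¬ ∃ c > (0 : ℝ), ∀ x : X, c * ‖x‖ ≤ ‖(T - z • 1) x‖}

/-- The isolated points of a set `S ⊆ ℂ`. -/
def iso (S : Set ℂ) : Set ℂ := {z ∈ S | 𝓝[S \ {z}] z = ⊥}

/-- The set `Π(T)` of poles of the resolvent of `T`. -/
noncomputable def poles (T : X →L[ℂ] X) : Set ℂ :=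
  {z ∈ spectrum ℂ T | ascent (T - z • 1) = descent (T - z • 1) ∧ ascent (T - z • 1) ≠ ⊤}

/-- The set `Π^a(T)` of left poles of `T`. -/
noncomputable def leftPoles (T : X →L[ℂ] X) : Set ℂ :=
  {z ∈ aspectrum T | ∃ d : ℕ, ascent (T - z • 1) = (d : ℕ∞) ∧
    IsClosed ((LinearMap.range (((T - z • 1) ^ (d + 1) : X →L[ℂ] X) : X →ₗ[ℂ] X) : Submodule ℂ X) : Set X)}

/-- `E(T)`: eigenvalues of `T` which are isolated points of the spectrum. -/
def eigE (T : X →L[ℂ] X) : Set ℂ :=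
  {z ∈ iso (spectrum ℂ T) | ∃ x : X, x ≠ 0 ∧ T x = z • x}

/-- `E^a(T)`: eigenvalues of `T` which are isolated points of the approximate point spectrum. -/
def eigEa (T : X →L[ℂ] X) : Set ℂ :=
  {z ∈ iso (aspectrum T) | ∃ x : X, x ≠ 0 ∧ T x = z • x}

/-- Fredholm operator. -/
def IsFredholm (T : X →L[ℂ] X) : Prop :=
  FiniteDimensional ℂ (LinearMap.ker (T : X →ₗ[ℂ] X)) ∧
  IsClosed ((LinearMap.range (T : X →ₗ[ℂ] X) : Submodule ℂ X) : Set X) ∧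
  FiniteDimensional ℂ (X ⧸ (LinearMap.range (T : X →ₗ[ℂ] X) : Submodule ℂ X))

/-- The Fredholm index `α(T) - β(T)`. -/
noncomputable def fredIndex (T : X →L[ℂ] X) : ℤ :=
  (Module.finrank ℂ (LinearMap.ker (T : X →ₗ[ℂ] X)) : ℤ) -
    (Module.finrank ℂ (X ⧸ (LinearMap.range (T : X →ₗ[ℂ] X) : Submodule ℂ X)) : ℤ)

/-- The Weyl spectrum `σ_w(T)`. -/
noncomputable def weylSpec (T : X →L[ℂ] X) : Set ℂ :=
  {z ∈ spectrum ℂ T | ¬ (IsFredholm (T - z • 1) ∧ fredIndex (T - z • 1) = 0)}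

/-- Upper semi-Fredholm operator. -/
def IsUpperSemiFredholm (T : X →L[ℂ] X) : Prop :=
  FiniteDimensional ℂ (LinearMap.ker (T : X →ₗ[ℂ] X)) ∧
  IsClosed ((LinearMap.range (T : X →ₗ[ℂ] X) : Submodule ℂ X) : Set X)

/-- `ind T ≤ 0`, allowing an infinite-dimensional cokernel. -/
def indexLE0 (T : X →L[ℂ] X) : Prop :=
  (Module.finrank ℂ (LinearMap.ker (T : X →ₗ[ℂ] X)) : Cardinal) ≤
    Module.rank ℂ (X ⧸ (LinearMap.range (T : X →ₗ[ℂ] X) : Submodule ℂ X))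

/-- The approximate (left) Weyl spectrum `σ_aw(T)`. -/
noncomputable def aweylSpec (T : X →L[ℂ] X) : Set ℂ :=
  {z ∈ aspectrum T | ¬ (IsUpperSemiFredholm (T - z • 1) ∧ indexLE0 (T - z • 1))}

/-- The restriction of `T` to the invariant subspace `range (Tⁿ)`. -/
noncomputable def restr (T : X →L[ℂ] X) (n : ℕ) :
    (LinearMap.range ((T ^ n : X →L[ℂ] X) : X →ₗ[ℂ] X) : Submodule ℂ X) →ₗ[ℂ] (LinearMap.range ((T ^ n : X →L[ℂ] X) : X →ₗ[ℂ] X) : Submodule ℂ X) :=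
  (T : X →ₗ[ℂ] X).restrict (fun x hx => by
    obtain ⟨y, hy⟩ := hx
    refine LinearMap.mem_range.mpr ⟨T y, ?_⟩
    have h : (T ^ n) * T = T * (T ^ n) := ((Commute.refl T).pow_left n).eq
    calc (T ^ n) (T y) = ((T ^ n) * T) y := rfl
      _ = (T * T ^ n) y := by rw [h]
      _ = T ((T ^ n) y) := rfl
      _ = T x := by rw [← hy]; rfl)

/-- `T` is B-Weyl: for some `n`, `range (Tⁿ)` is closed and the restriction of `T` to it is
Fredholm of index `0`. -/
noncomputable def IsBWeyl (T : X →L[ℂ] X) : Prop :=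
  ∃ n : ℕ, IsClosed ((LinearMap.range ((T ^ n : X →L[ℂ] X) : X →ₗ[ℂ] X) : Submodule ℂ X) : Set X) ∧
    FiniteDimensional ℂ (LinearMap.ker (restr T n)) ∧
    IsClosed ((LinearMap.range (restr T n) :
        Submodule ℂ (LinearMap.range ((T ^ n : X →L[ℂ] X) : X →ₗ[ℂ] X) : Submodule ℂ X)) :
      Set (LinearMap.range ((T ^ n : X →L[ℂ] X) : X →ₗ[ℂ] X) : Submodule ℂ X)) ∧
    FiniteDimensional ℂ
      ((LinearMap.range ((T ^ n : X →L[ℂ] X) : X →ₗ[ℂ] X) : Submodule ℂ X) ⧸ LinearMap.range (restr T n)) ∧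
    Module.finrank ℂ (LinearMap.ker (restr T n)) =
      Module.finrank ℂ ((LinearMap.range ((T ^ n : X →L[ℂ] X) : X →ₗ[ℂ] X) : Submodule ℂ X) ⧸ LinearMap.range (restr T n))

/-- `T` is upper B-Weyl: for some `n`, `range (Tⁿ)` is closed and the restriction of `T` to it is
upper semi-Fredholm of index `≤ 0`. -/
noncomputable def IsUpperBWeyl (T : X →L[ℂ] X) : Prop :=
  ∃ n : ℕ, IsClosed ((LinearMap.range ((T ^ n : X →L[ℂ] X) : X →ₗ[ℂ] X) : Submodule ℂ X) : Set X) ∧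
    FiniteDimensional ℂ (LinearMap.ker (restr T n)) ∧
    IsClosed ((LinearMap.range (restr T n) :
        Submodule ℂ (LinearMap.range ((T ^ n : X →L[ℂ] X) : X →ₗ[ℂ] X) : Submodule ℂ X)) :
      Set (LinearMap.range ((T ^ n : X →L[ℂ] X) : X →ₗ[ℂ] X) : Submodule ℂ X)) ∧
    (Module.finrank ℂ (LinearMap.ker (restr T n)) : Cardinal) ≤
      Module.rank ℂ ((LinearMap.range ((T ^ n : X →L[ℂ] X) : X →ₗ[ℂ] X) : Submodule ℂ X) ⧸ LinearMap.range (restr T n))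

/-- The B-Weyl spectrum `σ_Bw(T)`. -/
noncomputable def bweylSpec (T : X →L[ℂ] X) : Set ℂ :=
  {z ∈ spectrum ℂ T | ¬ IsBWeyl (T - z • 1)}

/-- The upper B-Weyl spectrum `σ_uBw(T)`. -/
noncomputable def ubweylSpec (T : X →L[ℂ] X) : Set ℂ :=
  {z ∈ aspectrum T | ¬ IsUpperBWeyl (T - z • 1)}

/-- `Φ^iso_Bw(T) = iso σ_w(T) ∩ σ_Bw(T)ᶜ`. -/
noncomputable def phiIsoBw (T : X →L[ℂ] X) : Set ℂ := iso (weylSpec T) ∩ (bweylSpec T)ᶜ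

/-- `Φ^iso_uBw(T) = iso σ_aw(T) ∩ σ_uBw(T)ᶜ`. -/
noncomputable def phiIsoUBw (T : X →L[ℂ] X) : Set ℂ := iso (aweylSpec T) ∩ (ubweylSpec T)ᶜ

/-- `T` is polaroid: isolated spectral points are poles. -/
noncomputable def Polaroid (T : X →L[ℂ] X) : Prop := iso (spectrum ℂ T) ⊆ poles T

/-- `T` is left polaroid: isolated points of `σ_a(T)` are left poles. -/
noncomputable def LeftPolaroid (T : X →L[ℂ] X) : Prop := iso (aspectrum T) ⊆ leftPoles T

/-- `T` is a-polaroid: isolated points of `σ_a(T)` are poles. -/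
noncomputable def APolaroid (T : X →L[ℂ] X) : Prop := iso (aspectrum T) ⊆ poles T

/-- Property `(P1)`: `E(T) = Π^a(T)`. -/
noncomputable def P1 (T : X →L[ℂ] X) : Prop := eigE T = leftPoles T

/-- Property `(P2)`: `E^a(T) = Π(T)`. -/
noncomputable def P2 (T : X →L[ℂ] X) : Prop := eigEa T = poles T

/-- The resolvent of `T` has a pole (finite-order singularity) at `z₀`. -/
noncomputable def HasResolventPoleAt (T : X →L[ℂ] X) (z₀ : ℂ) : Prop :=
  z₀ ∈ iso (spectrum ℂ T) ∧ ∃ n : ℕ, 0 < n ∧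
    (fun z => (z - z₀) ^ n • resolvent T z) =O[𝓝[≠] z₀] (fun _ => (1 : ℝ))

/-- A holomorphic (Riesz) functional calculus for `T` on an open neighbourhood `U ⊇ σ(T)`:
an algebra homomorphism on functions holomorphic on `U`, sending `1 ↦ 1`, `id ↦ T`, and
satisfying the spectral mapping theorem for the spectrum and approximate point spectrum. -/
structure HoloCalcOn (T : X →L[ℂ] X) (U : Set ℂ) where
  isOpen : IsOpen U
  spec_subset : spectrum ℂ T ⊆ U
  toFun : (ℂ → ℂ) → (X →L[ℂ] X)
  map_one : toFun (fun _ => 1) = 1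
  map_id : toFun id = T
  map_add : ∀ f g : ℂ → ℂ, AnalyticOnNhd ℂ f U → AnalyticOnNhd ℂ g U →
    toFun (f + g) = toFun f + toFun g
  map_mul : ∀ f g : ℂ → ℂ, AnalyticOnNhd ℂ f U → AnalyticOnNhd ℂ g U →
    toFun (f * g) = toFun f * toFun g
  map_smul : ∀ (c : ℂ) (f : ℂ → ℂ), AnalyticOnNhd ℂ f U → toFun (c • f) = c • toFun f
  spec_map : ∀ f : ℂ → ℂ, AnalyticOnNhd ℂ f U → spectrum ℂ (toFun f) = f '' spectrum ℂ T
  aspec_map : ∀ f : ℂ → ℂ, AnalyticOnNhd ℂ f U → aspectrum (toFun f) = f '' aspectrum T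

/-- `f` is non-constant on each connected component of `σ(T)`. -/
def NonConstOnSpecComponents (T : X →L[ℂ] X) (f : ℂ → ℂ) : Prop :=
  ∀ z ∈ spectrum ℂ T, ∃ w ∈ connectedComponentIn (spectrum ℂ T) z, f w ≠ f z

section Aux
set_option linter.unusedSectionVars false
set_option maxHeartbeats 1000000
set_option synthInstance.maxHeartbeats 400000

lemma clm_mem_ker {E F : Type*} [NormedAddCommGroup E] [NormedSpace ℂ E] [NormedAddCommGroup F]
    [NormedSpace ℂ F] {f : E →L[ℂ] F} {y : E} :
    y ∈ LinearMap.ker (f : E →ₗ[ℂ] F) ↔ f y = 0 := LinearMap.mem_ker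

lemma clm_mem_range {E F : Type*} [NormedAddCommGroup E] [NormedSpace ℂ E] [NormedAddCommGroup F]
    [NormedSpace ℂ F] {f : E →L[ℂ] F} {x : F} :
    x ∈ LinearMap.range (f : E →ₗ[ℂ] F) ↔ ∃ y, f y = x := LinearMap.mem_range

lemma clm_ker_eq_bot' {E F : Type*} [NormedAddCommGroup E] [NormedSpace ℂ E] [NormedAddCommGroup F]
    [NormedSpace ℂ F] {f : E →L[ℂ] F} :
    LinearMap.ker (f : E →ₗ[ℂ] F) = ⊥ ↔ ∀ m, f m = 0 → m = 0 := LinearMap.ker_eq_bot'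

lemma clm_range_eq_top {E F : Type*} [NormedAddCommGroup E] [NormedSpace ℂ E] [NormedAddCommGroup F]
    [NormedSpace ℂ F] {f : E →L[ℂ] F} :
    LinearMap.range (f : E →ₗ[ℂ] F) = ⊤ ↔ Function.Surjective f := LinearMap.range_eq_top


lemma pow_add_apply (T : X →L[ℂ] X) (a b : ℕ) (x : X) :
    (T ^ (a + b)) x = (T ^ a) ((T ^ b) x) := by
  rw [pow_add, ContinuousLinearMap.mul_apply]

lemma ker_stab (T : X →L[ℂ] X) {n : ℕ}
    (h : LinearMap.ker (((T ^ n) : X →L[ℂ] X) : X →ₗ[ℂ] X) = LinearMap.ker (((T ^ (n + 1)) : X →L[ℂ] X) : X →ₗ[ℂ] X)) {m : ℕ} (hm : n ≤ m) :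
    LinearMap.ker (((T ^ m) : X →L[ℂ] X) : X →ₗ[ℂ] X) = LinearMap.ker (((T ^ (m + 1)) : X →L[ℂ] X) : X →ₗ[ℂ] X) := by
  ext x
  simp only [clm_mem_ker] at *
  constructor
  · intro hx
    rw [show m + 1 = 1 + m by omega, pow_add_apply, hx, map_zero]
  · intro hx
    have h1 : (T ^ (n+1)) ((T ^ (m - n)) x) = 0 := by
      rw [← pow_add_apply, show n + 1 + (m - n) = m + 1 by omega]
      exact hx
    have h2 : (T ^ n) ((T ^ (m - n)) x) = 0 := by
      have := h ▸ (clm_mem_ker.mpr h1)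
      exact clm_mem_ker.mp this
    rw [← pow_add_apply, show n + (m - n) = m by omega] at h2
    exact h2

lemma ker_stab_all (T : X →L[ℂ] X) {n : ℕ}
    (h : LinearMap.ker (((T ^ n) : X →L[ℂ] X) : X →ₗ[ℂ] X) = LinearMap.ker (((T ^ (n + 1)) : X →L[ℂ] X) : X →ₗ[ℂ] X)) {m : ℕ} (hm : n ≤ m) :
    LinearMap.ker (((T ^ m) : X →L[ℂ] X) : X →ₗ[ℂ] X) = LinearMap.ker (((T ^ n) : X →L[ℂ] X) : X →ₗ[ℂ] X) := by
  induction m, hm using Nat.le_induction with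
  | base => rfl
  | succ m hm ih => rw [← ker_stab T h hm]; exact ih

lemma range_stab (T : X →L[ℂ] X) {n : ℕ}
    (h : LinearMap.range (((T ^ n) : X →L[ℂ] X) : X →ₗ[ℂ] X) = LinearMap.range (((T ^ (n + 1)) : X →L[ℂ] X) : X →ₗ[ℂ] X)) {m : ℕ} (hm : n ≤ m) :
    LinearMap.range (((T ^ m) : X →L[ℂ] X) : X →ₗ[ℂ] X) = LinearMap.range (((T ^ (m + 1)) : X →L[ℂ] X) : X →ₗ[ℂ] X) := by
  ext y
  simp only [clm_mem_range] at *
  constructor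
  · rintro ⟨x, rfl⟩
    have h1 : (T ^ n) x ∈ LinearMap.range (((T ^ (n+1)) : X →L[ℂ] X) : X →ₗ[ℂ] X) := h ▸ clm_mem_range.mpr ⟨x, rfl⟩
    obtain ⟨u, hu⟩ := clm_mem_range.mp h1
    refine ⟨u, ?_⟩
    rw [show m + 1 = (m - n) + (n + 1) by omega, pow_add_apply, hu, ← pow_add_apply,
      show m - n + n = m by omega]
  · rintro ⟨x, rfl⟩
    exact ⟨T x, by rw [← ContinuousLinearMap.mul_apply, ← pow_succ]⟩

lemma range_stab_all (T : X →L[ℂ] X) {n : ℕ}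
    (h : LinearMap.range (((T ^ n) : X →L[ℂ] X) : X →ₗ[ℂ] X) = LinearMap.range (((T ^ (n + 1)) : X →L[ℂ] X) : X →ₗ[ℂ] X)) {m : ℕ} (hm : n ≤ m) :
    LinearMap.range (((T ^ m) : X →L[ℂ] X) : X →ₗ[ℂ] X) = LinearMap.range (((T ^ n) : X →L[ℂ] X) : X →ₗ[ℂ] X) := by
  induction m, hm using Nat.le_induction with
  | base => rfl
  | succ m hm ih => rw [← range_stab T h hm]; exact ih

/-- kernel stabilizes at the range-stabilization point -/
lemma ker_stab_at_range_point (T : X →L[ℂ] X) {p q : ℕ}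
    (hk : LinearMap.ker (((T ^ p) : X →L[ℂ] X) : X →ₗ[ℂ] X) = LinearMap.ker (((T ^ (p + 1)) : X →L[ℂ] X) : X →ₗ[ℂ] X))
    (hr : LinearMap.range (((T ^ q) : X →L[ℂ] X) : X →ₗ[ℂ] X) = LinearMap.range (((T ^ (q + 1)) : X →L[ℂ] X) : X →ₗ[ℂ] X)) :
    LinearMap.ker (((T ^ q) : X →L[ℂ] X) : X →ₗ[ℂ] X) = LinearMap.ker (((T ^ (q + 1)) : X →L[ℂ] X) : X →ₗ[ℂ] X) := by
  refine le_antisymm ?_ ?_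
  · intro x hx
    simp only [clm_mem_ker] at *
    rw [show q + 1 = 1 + q by omega, pow_add_apply, hx, map_zero]
  · intro x hx
    simp only [clm_mem_ker] at hx ⊢
    have h1 : (T ^ q) x ∈ LinearMap.range (((T ^ (p + q + 1)) : X →L[ℂ] X) : X →ₗ[ℂ] X) := by
      rw [range_stab_all T hr (by omega)]
      exact clm_mem_range.mpr ⟨x, rfl⟩
    obtain ⟨u, hu⟩ := clm_mem_range.mp h1
    have h2 : (T ^ (p + q + 2)) u = 0 := by
      rw [show p + q + 2 = 1 + (p + q + 1) by omega, pow_add_apply, hu, ← pow_add_apply,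
        show 1 + q = q + 1 by omega]
      exact hx
    have h3 : (T ^ (p + q + 1)) u = 0 := by
      have e1 : LinearMap.ker (((T ^ (p + q + 1)) : X →L[ℂ] X) : X →ₗ[ℂ] X) = LinearMap.ker (((T ^ p) : X →L[ℂ] X) : X →ₗ[ℂ] X) :=
        ker_stab_all T hk (by omega)
      have e2 : LinearMap.ker (((T ^ (p + q + 2)) : X →L[ℂ] X) : X →ₗ[ℂ] X) = LinearMap.ker (((T ^ p) : X →L[ℂ] X) : X →ₗ[ℂ] X) :=
        ker_stab_all T hk (by omega)
      have := clm_mem_ker.mpr h2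
      rw [e2, ← e1] at this
      exact clm_mem_ker.mp this
    rw [← hu, h3]

/-- range stabilizes at the kernel-stabilization point, given `p ≤ q` -/
lemma range_stab_at_ker_point (T : X →L[ℂ] X) {p q : ℕ}
    (hk : LinearMap.ker (((T ^ p) : X →L[ℂ] X) : X →ₗ[ℂ] X) = LinearMap.ker (((T ^ (p + 1)) : X →L[ℂ] X) : X →ₗ[ℂ] X))
    (hr : LinearMap.range (((T ^ q) : X →L[ℂ] X) : X →ₗ[ℂ] X) = LinearMap.range (((T ^ (q + 1)) : X →L[ℂ] X) : X →ₗ[ℂ] X))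
    (hpq : p ≤ q) :
    LinearMap.range (((T ^ p) : X →L[ℂ] X) : X →ₗ[ℂ] X) = LinearMap.range (((T ^ (p + 1)) : X →L[ℂ] X) : X →ₗ[ℂ] X) := by
  refine le_antisymm ?_ ?_
  · rintro y ⟨x, rfl⟩
    have h1 : (T ^ q) x ∈ LinearMap.range (((T ^ (q + p + 1)) : X →L[ℂ] X) : X →ₗ[ℂ] X) := by
      rw [range_stab_all T hr (by omega)]
      exact clm_mem_range.mpr ⟨x, rfl⟩
    obtain ⟨u, hu⟩ := clm_mem_range.mp h1
    have h2 : (T ^ q) (x - (T ^ (p + 1)) u) = 0 := by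
      rw [map_sub, ← pow_add_apply, show q + (p + 1) = q + p + 1 by omega, hu, sub_self]
    have h3 : (T ^ p) (x - (T ^ (p + 1)) u) = 0 := by
      have := clm_mem_ker.mpr h2
      rw [ker_stab_all T hk hpq] at this
      exact clm_mem_ker.mp this
    rw [map_sub, sub_eq_zero] at h3
    refine clm_mem_range.mpr ⟨(T ^ p) u, ?_⟩
    rw [← pow_add_apply, show p + 1 + p = p + (p + 1) by omega, pow_add_apply]
    exact h3.symm
  · rintro y ⟨x, rfl⟩
    exact clm_mem_range.mpr ⟨T x, by rw [← ContinuousLinearMap.mul_apply, ← pow_succ]; rfl⟩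

lemma sInf_coe_image {S : Set ℕ} (h : S.Nonempty) :
    sInf ((((↑) : ℕ → ℕ∞)) '' S) = ((sInf S : ℕ) : ℕ∞) := by
  refine le_antisymm (sInf_le ⟨_, Nat.sInf_mem h, rfl⟩) (le_sInf ?_)
  rintro _ ⟨m, hm, rfl⟩
  exact_mod_cast Nat.sInf_le hm

lemma sInf_coe_image_empty : sInf ((((↑) : ℕ → ℕ∞)) '' (∅ : Set ℕ)) = ⊤ := by
  simp



lemma pow_add_apply' (T : X →L[ℂ] X) (a b : ℕ) (x : X) :
    (T ^ (a + b)) x = (T ^ a) ((T ^ b) x) := by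
  rw [pow_add, ContinuousLinearMap.mul_apply]

lemma main_construction (T : X →L[ℂ] X) {p : ℕ} (hp : 0 < p)
    (hk : LinearMap.ker (((T ^ p) : X →L[ℂ] X) : X →ₗ[ℂ] X) = LinearMap.ker (((T ^ (p + 1)) : X →L[ℂ] X) : X →ₗ[ℂ] X))
    (hr : LinearMap.range (((T ^ p) : X →L[ℂ] X) : X →ₗ[ℂ] X) = LinearMap.range (((T ^ (p + 1)) : X →L[ℂ] X) : X →ₗ[ℂ] X)) :
    ∃ δ > 0, ∃ C : ℝ, ∀ μ' : ℂ, μ' ≠ 0 → ‖μ'‖ < δ →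
      IsUnit (μ' • (1 : X →L[ℂ] X) - T) ∧
      ‖Ring.inverse (μ' • (1 : X →L[ℂ] X) - T)‖ ≤ C / ‖μ'‖ ^ p := by
  classical
  set N : Submodule ℂ X := LinearMap.ker (((T ^ p) : X →L[ℂ] X) : X →ₗ[ℂ] X) with hN
  haveI hNc : IsClosed (N : Set X) := ContinuousLinearMap.isClosed_ker (T ^ p)
  -- T-invariance of N
  have hTN : ∀ x ∈ N, T x ∈ N := by
    intro x hx
    have hx1 : x ∈ LinearMap.ker (((T ^ (p + 1)) : X →L[ℂ] X) : X →ₗ[ℂ] X) := hk ▸ hx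
    simp only [hN, clm_mem_ker] at hx1 ⊢
    rw [show (T ^ p) (T x) = (T ^ (p + 1)) x by rw [pow_succ, ContinuousLinearMap.mul_apply]]
    exact hx1
  have hcomap : N ≤ N.comap (T : X →ₗ[ℂ] X) := fun x hx => hTN x hx
  -- induced operator on the quotient
  let Tl : (X ⧸ N) →ₗ[ℂ] (X ⧸ N) := N.mapQ N (T : X →ₗ[ℂ] X) hcomap
  have hTl_mk : ∀ x : X, Tl (Submodule.Quotient.mk x) = Submodule.Quotient.mk (T x) :=
    fun x => rfl
  have hTl_cont : Continuous Tl := by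
    rw [← (Submodule.isOpenQuotientMap_mkQ N).continuous_comp_iff]
    have : (Tl ∘ N.mkQ) = fun x => Submodule.Quotient.mk (T x) := by
      funext x
      exact hTl_mk x
    rw [this]
    exact continuous_quot_mk.comp T.continuous
  let Tb : (X ⧸ N) →L[ℂ] (X ⧸ N) := ⟨Tl, hTl_cont⟩
  have hTb_mk : ∀ x : X, Tb (Submodule.Quotient.mk x) = Submodule.Quotient.mk (T x) := hTl_mk
  -- Tb is bijective
  have hker : LinearMap.ker (Tb : (X ⧸ N) →ₗ[ℂ] (X ⧸ N)) = ⊥ := by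
    rw [clm_ker_eq_bot']
    intro m hm
    obtain ⟨x, rfl⟩ := Submodule.Quotient.mk_surjective N m
    rw [hTb_mk, Submodule.Quotient.mk_eq_zero] at hm
    rw [Submodule.Quotient.mk_eq_zero]
    have : x ∈ LinearMap.ker (((T ^ (p + 1)) : X →L[ℂ] X) : X →ₗ[ℂ] X) := by
      simp only [clm_mem_ker]
      rw [pow_succ, ContinuousLinearMap.mul_apply]
      exact clm_mem_ker.mp hm
    rwa [← hk] at this
  have htop : LinearMap.range (Tb : (X ⧸ N) →ₗ[ℂ] (X ⧸ N)) = ⊤ := by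
    rw [clm_range_eq_top]
    intro m
    obtain ⟨x, rfl⟩ := Submodule.Quotient.mk_surjective N m
    have h1 : (T ^ p) x ∈ LinearMap.range (((T ^ (p + 1)) : X →L[ℂ] X) : X →ₗ[ℂ] X) :=
      hr ▸ clm_mem_range.mpr ⟨x, rfl⟩
    obtain ⟨u, hu⟩ := clm_mem_range.mp h1
    refine ⟨Submodule.Quotient.mk u, ?_⟩
    rw [hTb_mk]
    rw [show (Submodule.Quotient.mk (T u) : X ⧸ N) = Submodule.Quotient.mk x ↔
      T u - x ∈ N from Submodule.Quotient.eq N]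
    simp only [hN, clm_mem_ker, map_sub]
    rw [sub_eq_zero, show (T ^ p) (T u) = (T ^ (p + 1)) u by
      rw [pow_succ, ContinuousLinearMap.mul_apply], hu]
  let e := ContinuousLinearEquiv.ofBijective Tb hker htop
  have he : (⇑e : (X ⧸ N) → (X ⧸ N)) = ⇑Tb := ContinuousLinearEquiv.coeFn_ofBijective _ _ _
  -- Tb as a unit of the Banach algebra
  let UT : ((X ⧸ N) →L[ℂ] (X ⧸ N))ˣ :=
    { val := Tb
      inv := (e.symm : (X ⧸ N) →L[ℂ] (X ⧸ N))
      val_inv := by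
        ext m
        simp only [ContinuousLinearMap.mul_apply, ContinuousLinearMap.one_apply,
          ContinuousLinearEquiv.coe_coe]
        rw [show Tb (e.symm m) = e (e.symm m) from (congrFun he _).symm]
        exact e.apply_symm_apply m
      inv_val := by
        ext m
        simp only [ContinuousLinearMap.mul_apply, ContinuousLinearMap.one_apply,
          ContinuousLinearEquiv.coe_coe]
        rw [show Tb m = e m from (congrFun he _).symm]
        exact e.symm_apply_apply m }
  -- invertibility and inverse bound for μ' • 1 - Tb, μ' small
  have hUnit_ev : ∀ᶠ μ' : ℂ in 𝓝 0, IsUnit (μ' • (1 : (X ⧸ N) →L[ℂ] (X ⧸ N)) - Tb) := by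
    have h1 : Tendsto (fun μ' : ℂ => μ' • (1 : (X ⧸ N) →L[ℂ] (X ⧸ N)) - Tb) (𝓝 0)
        (𝓝 (((-UT : ((X ⧸ N) →L[ℂ] (X ⧸ N))ˣ) : (X ⧸ N) →L[ℂ] (X ⧸ N)))) := by
      have : Tendsto (fun μ' : ℂ => μ' • (1 : (X ⧸ N) →L[ℂ] (X ⧸ N)) - Tb) (𝓝 0)
          (𝓝 ((0 : ℂ) • (1 : (X ⧸ N) →L[ℂ] (X ⧸ N)) - Tb)) :=
        ((continuous_id.smul continuous_const).sub continuous_const).tendsto 0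
      have e : ((-UT : ((X ⧸ N) →L[ℂ] (X ⧸ N))ˣ) : (X ⧸ N) →L[ℂ] (X ⧸ N))
          = (0 : ℂ) • (1 : (X ⧸ N) →L[ℂ] (X ⧸ N)) - Tb := by
        rw [show (0 : ℂ) • (1 : (X ⧸ N) →L[ℂ] (X ⧸ N)) = 0 by ext m; exact zero_smul ℂ m, zero_sub]; rfl
      rw [e]; exact this
    exact h1.eventually (eventually_iff.mpr (Units.nhds (R := (X ⧸ N) →L[ℂ] (X ⧸ N)) (-UT)))
  have hbound_ev : ∃ M : ℝ, ∀ᶠ μ' : ℂ in 𝓝 0,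
      ‖Ring.inverse (μ' • (1 : (X ⧸ N) →L[ℂ] (X ⧸ N)) - Tb)‖ ≤ M := by
    have h2 := NormedRing.inverse_add_norm (R := (X ⧸ N) →L[ℂ] (X ⧸ N)) (-UT)
    rw [Asymptotics.isBigO_iff] at h2
    obtain ⟨M, hM⟩ := h2
    refine ⟨M, ?_⟩
    have htend : Tendsto (fun μ' : ℂ => μ' • (1 : (X ⧸ N) →L[ℂ] (X ⧸ N))) (𝓝 0) (𝓝 0) := by
      have : Tendsto (fun μ' : ℂ => μ' • (1 : (X ⧸ N) →L[ℂ] (X ⧸ N))) (𝓝 0)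
          (𝓝 ((0 : ℂ) • (1 : (X ⧸ N) →L[ℂ] (X ⧸ N)))) :=
        (continuous_id.smul continuous_const).tendsto 0
      rwa [show (0 : ℂ) • (1 : (X ⧸ N) →L[ℂ] (X ⧸ N)) = 0 by ext m; exact zero_smul ℂ m] at this
    filter_upwards [htend.eventually hM] with μ' h
    have : ((-UT : ((X ⧸ N) →L[ℂ] (X ⧸ N))ˣ) : (X ⧸ N) →L[ℂ] (X ⧸ N))
        + μ' • (1 : (X ⧸ N) →L[ℂ] (X ⧸ N)) = μ' • (1 : (X ⧸ N) →L[ℂ] (X ⧸ N)) - Tb := by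
      show -Tb + _ = _
      abel
    rw [this] at h
    simpa using h
  obtain ⟨M, hM_ev⟩ := hbound_ev
  rw [Metric.eventually_nhds_iff] at hM_ev
  obtain ⟨δ₁, hδ₁, hM⟩ := hM_ev
  rw [Metric.eventually_nhds_iff] at hUnit_ev
  obtain ⟨δ₂, hδ₂, hU⟩ := hUnit_ev
  set K : ℝ := max 1 ‖T‖ with hK
  have hK1 : (1 : ℝ) ≤ K := le_max_left _ _
  have hK0 : (0 : ℝ) ≤ K := le_trans zero_le_one hK1
  have hTK : ‖T‖ ≤ K := le_max_right _ _
  have hKx : ∀ (k : ℕ) (x : X), ‖(T ^ k) x‖ ≤ K ^ k * ‖x‖ := by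
    intro k
    induction k with
    | zero => intro x; simp
    | succ k ih =>
      intro x
      calc ‖(T ^ (k + 1)) x‖ = ‖T ((T ^ k) x)‖ := by
            rw [show k + 1 = 1 + k by omega, pow_add_apply', pow_one]
        _ ≤ ‖T‖ * ‖(T ^ k) x‖ := T.le_opNorm _
        _ ≤ K * (K ^ k * ‖x‖) := by
            refine mul_le_mul hTK (ih x) (norm_nonneg _) hK0
        _ = K ^ (k + 1) * ‖x‖ := by ring
  refine ⟨min 1 (min δ₁ δ₂), by positivity, ?_⟩
  -- the constant will be fixed after we know `M`'s sign inside the branch; use explicit formula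
  refine ⟨(M + 1) + p * K ^ p * (1 + 2 * K * (M + 1)), ?_⟩
  intro μ' hμ0 hμδ
  have hμ1 : ‖μ'‖ ≤ 1 := le_of_lt (lt_of_lt_of_le hμδ (min_le_left _ _))
  have hμδ₁ : dist μ' 0 < δ₁ := by
    rw [dist_zero_right]
    exact lt_of_lt_of_le hμδ (le_trans (min_le_right _ _) (min_le_left _ _))
  have hμδ₂ : dist μ' 0 < δ₂ := by
    rw [dist_zero_right]
    exact lt_of_lt_of_le hμδ (le_trans (min_le_right _ _) (min_le_right _ _))
  have hμpos : (0 : ℝ) < ‖μ'‖ := norm_pos_iff.mpr hμ0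
  set Sb : (X ⧸ N) →L[ℂ] (X ⧸ N) := μ' • (1 : (X ⧸ N) →L[ℂ] (X ⧸ N)) - Tb with hSb
  have hSbU : IsUnit Sb := hU hμδ₂
  have hMb : ‖Ring.inverse Sb‖ ≤ M := hM hμδ₁
  have hM0 : (0 : ℝ) ≤ M := le_trans (by positivity) hMb
  set W : (X ⧸ N) →L[ℂ] (X ⧸ N) := Ring.inverse Sb with hW
  have hWS : ∀ m : X ⧸ N, W (Sb m) = m := by
    intro m
    have := Ring.inverse_mul_cancel Sb hSbU
    calc W (Sb m) = (W * Sb) m := rfl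
      _ = (1 : (X ⧸ N) →L[ℂ] (X ⧸ N)) m := by rw [this]
      _ = m := rfl
  have hSW : ∀ m : X ⧸ N, Sb (W m) = m := by
    intro m
    have := Ring.mul_inverse_cancel Sb hSbU
    calc Sb (W m) = (Sb * W) m := rfl
      _ = (1 : (X ⧸ N) →L[ℂ] (X ⧸ N)) m := by rw [this]
      _ = m := rfl
  set S : X →L[ℂ] X := μ' • (1 : X →L[ℂ] X) - T with hS
  have hS_apply : ∀ x : X, S x = μ' • x - T x := by
    intro x
    simp [hS, ContinuousLinearMap.sub_apply, ContinuousLinearMap.smul_apply,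
      ContinuousLinearMap.one_apply]
  have hS_mk : ∀ x : X, Sb (Submodule.Quotient.mk x) = Submodule.Quotient.mk (S x) := by
    intro x
    rw [hS_apply]
    calc Sb (Submodule.Quotient.mk x)
        = μ' • (Submodule.Quotient.mk x : X ⧸ N) - Tb (Submodule.Quotient.mk x) := by
          simp [hSb, ContinuousLinearMap.sub_apply, ContinuousLinearMap.smul_apply,
            ContinuousLinearMap.one_apply]
      _ = Submodule.Quotient.mk (μ' • x - T x) := by
          rw [hTb_mk, ← Submodule.Quotient.mk_smul, ← Submodule.Quotient.mk_sub]
  have hnilp : ∀ u ∈ N, (T ^ p) u = 0 := fun u hu => clm_mem_ker.mp hu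
  have hS_norm : ∀ x : X, ‖S x‖ ≤ 2 * K * ‖x‖ := by
    intro x
    rw [hS_apply]
    calc ‖μ' • x - T x‖ ≤ ‖μ' • x‖ + ‖T x‖ := norm_sub_le _ _
      _ ≤ ‖μ'‖ * ‖x‖ + ‖T‖ * ‖x‖ := by
          refine add_le_add (le_of_eq (norm_smul _ _)) (T.le_opNorm _)
      _ ≤ 1 * ‖x‖ + K * ‖x‖ := by
          refine add_le_add (mul_le_mul_of_nonneg_right hμ1 (norm_nonneg _))
            (mul_le_mul_of_nonneg_right hTK (norm_nonneg _))
      _ ≤ 2 * K * ‖x‖ := by nlinarith [norm_nonneg x]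
  -- the quantitative solver
  have hsolve : ∀ v : X, ∃ x : X, S x = v ∧
      ‖x‖ * ‖μ'‖ ^ p ≤ ((M + 1) + p * K ^ p * (1 + 2 * K * (M + 1))) * ‖v‖ := by
    intro v
    rcases eq_or_ne v 0 with rfl | hv
    · exact ⟨0, by simp, by simp [pow_pos hμpos]⟩
    have hv0 : (0 : ℝ) < ‖v‖ := norm_pos_iff.mpr hv
    obtain ⟨w, hw_mk, hw_norm⟩ := Submodule.Quotient.norm_mk_lt (W (Submodule.Quotient.mk v)) hv0
    have hxbar : ‖W (Submodule.Quotient.mk v : X ⧸ N)‖ ≤ M * ‖v‖ := by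
      calc ‖W (Submodule.Quotient.mk v : X ⧸ N)‖ ≤ ‖W‖ * ‖(Submodule.Quotient.mk v : X ⧸ N)‖ :=
            W.le_opNorm _
        _ ≤ M * ‖v‖ := by
            refine mul_le_mul hMb (Submodule.Quotient.norm_mk_le N v) (norm_nonneg _) hM0
    have hw : ‖w‖ ≤ (M + 1) * ‖v‖ := by
      have := hw_norm
      nlinarith [hxbar]
    set u : X := v - S w with hu
    have hu_mem : u ∈ N := by
      rw [← Submodule.Quotient.mk_eq_zero]
      have : (Submodule.Quotient.mk u : X ⧸ N) =
          Submodule.Quotient.mk v - Submodule.Quotient.mk (S w) := Submodule.Quotient.mk_sub N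
      rw [this, ← hS_mk, hw_mk, hSW, sub_self]
    have hu_norm : ‖u‖ ≤ (1 + 2 * K * (M + 1)) * ‖v‖ := by
      calc ‖u‖ ≤ ‖v‖ + ‖S w‖ := norm_sub_le _ _
        _ ≤ ‖v‖ + 2 * K * ‖w‖ := by linarith [hS_norm w]
        _ ≤ ‖v‖ + 2 * K * ((M + 1) * ‖v‖) := by nlinarith [hS_norm w, hw, hK0]
        _ = (1 + 2 * K * (M + 1)) * ‖v‖ := by ring
    set m : X := ∑ k ∈ Finset.range p, (μ'⁻¹) ^ (k + 1) • (T ^ k) u with hm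
    have hSm : S m = u := by
      have hterm : ∀ k : ℕ, S ((μ'⁻¹) ^ (k + 1) • (T ^ k) u) =
          (μ'⁻¹) ^ k • (T ^ k) u - (μ'⁻¹) ^ (k + 1) • (T ^ (k + 1)) u := by
        intro k
        rw [map_smul, hS_apply, smul_sub, smul_smul]
        congr 2
        · rw [pow_succ, mul_assoc, inv_mul_cancel₀ hμ0, mul_one]
        · rw [show k + 1 = 1 + k by omega, pow_add_apply', pow_one]
      calc S m = ∑ k ∈ Finset.range p, S ((μ'⁻¹) ^ (k + 1) • (T ^ k) u) := map_sum _ _ _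
        _ = ∑ k ∈ Finset.range p,
            ((μ'⁻¹) ^ k • (T ^ k) u - (μ'⁻¹) ^ (k + 1) • (T ^ (k + 1)) u) := by
            exact Finset.sum_congr rfl fun k _ => hterm k
        _ = (μ'⁻¹) ^ 0 • (T ^ 0) u - (μ'⁻¹) ^ p • (T ^ p) u :=
            Finset.sum_range_sub' (fun k => (μ'⁻¹) ^ k • (T ^ k) u) p
        _ = u := by rw [hnilp u hu_mem, smul_zero, sub_zero, pow_zero, pow_zero, one_smul,
            ContinuousLinearMap.one_apply]
    have hμinv1 : (1 : ℝ) ≤ ‖μ'‖⁻¹ := by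
      rw [le_inv_comm₀ one_pos hμpos]
      simpa using hμ1
    have hm_norm : ‖m‖ * ‖μ'‖ ^ p ≤ p * K ^ p * ‖u‖ := by
      have hterm_norm : ∀ k ∈ Finset.range p, ‖(μ'⁻¹) ^ (k + 1) • (T ^ k) u‖ ≤
          (‖μ'‖⁻¹) ^ p * (K ^ p * ‖u‖) := by
        intro k hkmem
        have hkp : k + 1 ≤ p := Finset.mem_range.mp hkmem
        rw [norm_smul, norm_pow, norm_inv]
        calc ‖μ'‖⁻¹ ^ (k + 1) * ‖(T ^ k) u‖ ≤ ‖μ'‖⁻¹ ^ (k + 1) * (K ^ k * ‖u‖) := by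
              refine mul_le_mul_of_nonneg_left (hKx k u) (by positivity)
          _ ≤ ‖μ'‖⁻¹ ^ p * (K ^ p * ‖u‖) := by
              refine mul_le_mul (pow_le_pow_right₀ hμinv1 hkp) ?_ (by positivity) (by positivity)
              refine mul_le_mul_of_nonneg_right (pow_le_pow_right₀ hK1 (by omega)) (norm_nonneg _)
      have h1 : ‖m‖ ≤ p * (‖μ'‖⁻¹ ^ p * (K ^ p * ‖u‖)) := by
        calc ‖m‖ ≤ ∑ k ∈ Finset.range p, ‖(μ'⁻¹) ^ (k + 1) • (T ^ k) u‖ :=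
              norm_sum_le _ _
          _ ≤ ∑ _k ∈ Finset.range p, (‖μ'‖⁻¹ ^ p * (K ^ p * ‖u‖)) :=
              Finset.sum_le_sum hterm_norm
          _ = p * (‖μ'‖⁻¹ ^ p * (K ^ p * ‖u‖)) := by
              rw [Finset.sum_const, Finset.card_range, nsmul_eq_mul]
      have hppos : (0 : ℝ) < ‖μ'‖ ^ p := pow_pos hμpos p
      have h2 : ‖μ'‖⁻¹ ^ p * ‖μ'‖ ^ p = 1 := by
        rw [← mul_pow, inv_mul_cancel₀ (ne_of_gt hμpos), one_pow]
      calc ‖m‖ * ‖μ'‖ ^ p ≤ p * (‖μ'‖⁻¹ ^ p * (K ^ p * ‖u‖)) * ‖μ'‖ ^ p := by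
            refine mul_le_mul_of_nonneg_right h1 (le_of_lt hppos)
        _ = (p * K ^ p * ‖u‖) * (‖μ'‖⁻¹ ^ p * ‖μ'‖ ^ p) := by ring
        _ = p * K ^ p * ‖u‖ := by rw [h2, mul_one]
    refine ⟨w + m, by rw [map_add, hSm, hu]; abel, ?_⟩
    have hμp1 : ‖μ'‖ ^ p ≤ 1 := pow_le_one₀ (le_of_lt hμpos) hμ1
    calc ‖w + m‖ * ‖μ'‖ ^ p ≤ (‖w‖ + ‖m‖) * ‖μ'‖ ^ p := by
          refine mul_le_mul_of_nonneg_right (norm_add_le _ _) (by positivity)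
      _ = ‖w‖ * ‖μ'‖ ^ p + ‖m‖ * ‖μ'‖ ^ p := by ring
      _ ≤ (M + 1) * ‖v‖ * 1 + p * K ^ p * ((1 + 2 * K * (M + 1)) * ‖v‖) := by
          refine add_le_add ?_ ?_
          · refine mul_le_mul (by nlinarith) hμp1 (by positivity) (by positivity)
          · refine le_trans hm_norm ?_
            refine mul_le_mul_of_nonneg_left hu_norm (by positivity)
      _ = ((M + 1) + p * K ^ p * (1 + 2 * K * (M + 1))) * ‖v‖ := by ring
  -- injectivity
  have hinj : ∀ x : X, S x = 0 → x = 0 := by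
    intro x hx
    have hxN : x ∈ N := by
      have h1 : Sb (Submodule.Quotient.mk x) = 0 := by rw [hS_mk, hx]; simp
      have h2 : (Submodule.Quotient.mk x : X ⧸ N) = 0 := by
        have := hWS (Submodule.Quotient.mk x)
        rw [h1, map_zero] at this
        exact this.symm
      exact (Submodule.Quotient.mk_eq_zero N).mp h2
    have hTx : T x = μ' • x := by
      have := hS_apply x
      rw [hx] at this
      have := this.symm
      rw [sub_eq_zero] at this
      exact this.symm
    have hpow : ∀ k : ℕ, (T ^ k) x = μ' ^ k • x := by
      intro k
      induction k with
      | zero => simp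
      | succ k ih =>
        rw [show k + 1 = 1 + k by omega, pow_add_apply', pow_one, ih, map_smul, hTx,
          smul_smul, ← pow_succ, show 1 + k = k + 1 by omega]
    have h0 : μ' ^ p • x = 0 := by rw [← hpow, hnilp x hxN]
    have := smul_eq_zero.mp h0
    rcases this with h | h
    · exact absurd h (pow_ne_zero p hμ0)
    · exact h
  -- S is a unit
  have hker' : LinearMap.ker (S : X →ₗ[ℂ] X) = ⊥ := clm_ker_eq_bot'.mpr fun x hx => hinj x hx
  have htop' : LinearMap.range (S : X →ₗ[ℂ] X) = ⊤ := by
    rw [clm_range_eq_top]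
    intro v
    obtain ⟨x, hx, -⟩ := hsolve v
    exact ⟨x, hx⟩
  let eS := ContinuousLinearEquiv.ofBijective S hker' htop'
  have heS : (⇑eS : X → X) = ⇑S := ContinuousLinearEquiv.coeFn_ofBijective _ _ _
  have hSU : IsUnit S := by
    refine ⟨⟨S, (eS.symm : X →L[ℂ] X), ?_, ?_⟩, rfl⟩
    · ext x
      simp only [ContinuousLinearMap.mul_apply, ContinuousLinearMap.one_apply,
        ContinuousLinearEquiv.coe_coe]
      rw [show S (eS.symm x) = eS (eS.symm x) from (congrFun heS _).symm]
      exact eS.apply_symm_apply x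
    · ext x
      simp only [ContinuousLinearMap.mul_apply, ContinuousLinearMap.one_apply,
        ContinuousLinearEquiv.coe_coe]
      rw [show S x = eS x from (congrFun heS _).symm]
      exact eS.symm_apply_apply x
  refine ⟨hSU, ?_⟩
  have hCnn : (0 : ℝ) ≤ (M + 1) + p * K ^ p * (1 + 2 * K * (M + 1)) := by positivity
  have hppos : (0 : ℝ) < ‖μ'‖ ^ p := pow_pos hμpos p
  refine ContinuousLinearMap.opNorm_le_bound _ (div_nonneg hCnn (le_of_lt hppos)) ?_
  intro v
  obtain ⟨x, hx, hxb⟩ := hsolve v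
  have hRx : Ring.inverse S v = x := by
    have h1 := Ring.inverse_mul_cancel S hSU
    calc Ring.inverse S v = Ring.inverse S (S x) := by rw [hx]
      _ = (Ring.inverse S * S) x := rfl
      _ = (1 : X →L[ℂ] X) x := by rw [h1]
      _ = x := rfl
  rw [hRx]
  rw [div_mul_eq_mul_div, le_div_iff₀ hppos]
  exact hxb



lemma pow_add_apply'' (T : X →L[ℂ] X) (a b : ℕ) (x : X) :
    (T ^ (a + b)) x = (T ^ a) ((T ^ b) x) := by
  rw [pow_add, ContinuousLinearMap.mul_apply]

lemma alg_sub (A : X →L[ℂ] X) (z μ : ℂ) :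
    algebraMap ℂ (X →L[ℂ] X) μ - A = (μ - z) • (1 : X →L[ℂ] X) - (A - z • 1) := by
  rw [Algebra.algebraMap_eq_smul_one, sub_smul]
  abel

/-- continuous extension principle for operator-valued functions -/
lemma eq_at_of_eventually_eq {φ ψ : ℂ → (X →L[ℂ] X)} {z : ℂ}
    (hφ : ContinuousAt φ z) (hψ : ContinuousAt ψ z)
    (h : ∀ᶠ μ in 𝓝[≠] z, φ μ = ψ μ) : φ z = ψ z := by
  have hφt : Tendsto φ (𝓝[≠] z) (𝓝 (φ z)) := hφ.tendsto.mono_left nhdsWithin_le_nhds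
  have hψt : Tendsto ψ (𝓝[≠] z) (𝓝 (ψ z)) := hψ.tendsto.mono_left nhdsWithin_le_nhds
  exact tendsto_nhds_unique hφt ((tendsto_congr' h).mpr hψt)

/-- ascent bound from a pole -/
lemma ker_le_of_pole (A : X →L[ℂ] X) (z : ℂ) {n : ℕ}
    (hres : ∀ᶠ μ in 𝓝[≠] z, μ ∈ resolventSet ℂ A)
    (hO : (fun μ => (μ - z) ^ n • resolvent A μ) =O[𝓝[≠] z] (fun _ => (1 : ℝ))) :
    LinearMap.ker ((((A - z • 1) ^ (n + 1)) : X →L[ℂ] X) : X →ₗ[ℂ] X) ≤ LinearMap.ker ((((A - z • 1) ^ n) : X →L[ℂ] X) : X →ₗ[ℂ] X) := by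
  set T : X →L[ℂ] X := A - z • 1 with hT
  intro x hx
  rw [clm_mem_ker] at hx ⊢
  -- the explicit formula for `resolvent A μ x`
  have hid : ∀ μ : ℂ, μ ∈ resolventSet ℂ A →
      (μ - z) ^ (n + 1) • (resolvent A μ) x
        = ∑ k ∈ Finset.range (n + 1), (μ - z) ^ (n - k) • (T ^ k) x := by
    intro μ hμ
    have hcancel : ∀ y : X, (resolvent A μ) ((algebraMap ℂ (X →L[ℂ] X) μ - A) y) = y := by
      intro y
      have h1 : Ring.inverse (algebraMap ℂ (X →L[ℂ] X) μ - A)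
          * (algebraMap ℂ (X →L[ℂ] X) μ - A) = 1 := Ring.inverse_mul_cancel _ hμ
      calc (resolvent A μ) ((algebraMap ℂ (X →L[ℂ] X) μ - A) y)
          = (Ring.inverse (algebraMap ℂ (X →L[ℂ] X) μ - A)
              * (algebraMap ℂ (X →L[ℂ] X) μ - A)) y := rfl
        _ = y := by rw [h1]; rfl
    have hsum : (algebraMap ℂ (X →L[ℂ] X) μ - A)
        (∑ k ∈ Finset.range (n + 1), (μ - z) ^ (n - k) • (T ^ k) x)
          = (μ - z) ^ (n + 1) • x := by
      have happ : ∀ y : X, (algebraMap ℂ (X →L[ℂ] X) μ - A) y = (μ - z) • y - T y := by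
        intro y
        rw [alg_sub A z μ, hT]
        simp [ContinuousLinearMap.sub_apply, ContinuousLinearMap.smul_apply,
          ContinuousLinearMap.one_apply]
      rw [map_sum]
      have hterm : ∀ k ∈ Finset.range (n + 1),
          (algebraMap ℂ (X →L[ℂ] X) μ - A) ((μ - z) ^ (n - k) • (T ^ k) x)
            = (μ - z) ^ (n + 1 - k) • (T ^ k) x - (μ - z) ^ (n + 1 - (k + 1)) • (T ^ (k + 1)) x := by
        intro k hk
        have hkn : k ≤ n := by
          have := Finset.mem_range.mp hk; omega
        calc (algebraMap ℂ (X →L[ℂ] X) μ - A) ((μ - z) ^ (n - k) • (T ^ k) x)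
            = (μ - z) • ((μ - z) ^ (n - k) • (T ^ k) x)
              - T ((μ - z) ^ (n - k) • (T ^ k) x) := happ _
          _ = (μ - z) ^ (n + 1 - k) • (T ^ k) x
              - (μ - z) ^ (n + 1 - (k + 1)) • (T ^ (k + 1)) x := by
              rw [map_smul, smul_smul, ← pow_succ', show n - k + 1 = n + 1 - k by omega,
                show n + 1 - (k + 1) = n - k by omega,
                show T ((T ^ k) x) = (T ^ (k + 1)) x by
                  rw [show k + 1 = 1 + k by omega, pow_add_apply'', pow_one]]
      rw [Finset.sum_congr rfl hterm,
        Finset.sum_range_sub' (fun k => (μ - z) ^ (n + 1 - k) • (T ^ k) x) (n + 1)]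
      simp only [Nat.sub_self, Nat.sub_zero, pow_zero, one_smul, hx, smul_zero, sub_zero,
        ContinuousLinearMap.one_apply]
    calc (μ - z) ^ (n + 1) • (resolvent A μ) x
        = (resolvent A μ) ((μ - z) ^ (n + 1) • x) := (map_smul _ _ _).symm
      _ = (resolvent A μ) ((algebraMap ℂ (X →L[ℂ] X) μ - A)
            (∑ k ∈ Finset.range (n + 1), (μ - z) ^ (n - k) • (T ^ k) x)) := by rw [hsum]
      _ = ∑ k ∈ Finset.range (n + 1), (μ - z) ^ (n - k) • (T ^ k) x := hcancel _
  obtain ⟨C, hC⟩ := hO.bound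
  have hCb : ∀ᶠ μ in 𝓝[≠] z, ‖(μ - z) ^ n • resolvent A μ‖ ≤ C := by
    filter_upwards [hC] with μ h
    simpa using h
  have htendzero : Tendsto (fun μ => (μ - z) ^ (n + 1) • (resolvent A μ) x) (𝓝[≠] z) (𝓝 0) := by
    have hbound : ∀ᶠ μ in 𝓝[≠] z,
        ‖(μ - z) ^ (n + 1) • (resolvent A μ) x‖ ≤ ‖μ - z‖ * (C * ‖x‖) := by
      filter_upwards [hCb] with μ h
      have h1 : (μ - z) ^ (n + 1) • (resolvent A μ) x
          = (μ - z) • (((μ - z) ^ n • resolvent A μ) x) := by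
        rw [ContinuousLinearMap.smul_apply, smul_smul, ← pow_succ']
      rw [h1, norm_smul]
      refine mul_le_mul_of_nonneg_left ?_ (norm_nonneg _)
      calc ‖((μ - z) ^ n • resolvent A μ) x‖ ≤ ‖(μ - z) ^ n • resolvent A μ‖ * ‖x‖ :=
            ContinuousLinearMap.le_opNorm _ _
        _ ≤ C * ‖x‖ := mul_le_mul_of_nonneg_right h (norm_nonneg _)
    have hg : Tendsto (fun μ : ℂ => ‖μ - z‖ * (C * ‖x‖)) (𝓝[≠] z) (𝓝 0) := by
      have h2 : Tendsto (fun μ : ℂ => ‖μ - z‖) (𝓝 z) (𝓝 0) := by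
        have hcont : Continuous (fun μ : ℂ => ‖μ - z‖) :=
          (continuous_id.sub continuous_const).norm
        have := hcont.tendsto z
        simpa using this
      have h4 : Tendsto (fun μ : ℂ => ‖μ - z‖) (𝓝[≠] z) (𝓝 0) :=
        h2.mono_left (nhdsWithin_le_nhds (s := {z}ᶜ))
      have := h4.mul_const (C * ‖x‖)
      simpa using this
    exact squeeze_zero_norm' hbound hg
  have htendsum : Tendsto (fun μ => ∑ k ∈ Finset.range (n + 1), (μ - z) ^ (n - k) • (T ^ k) x)
      (𝓝[≠] z) (𝓝 ((T ^ n) x)) := by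
    have hc : Continuous (fun μ : ℂ => ∑ k ∈ Finset.range (n + 1), (μ - z) ^ (n - k) • (T ^ k) x) :=
      continuous_finset_sum _ fun k _ =>
        ((continuous_id.sub continuous_const).pow _).smul continuous_const
    have h3 := (hc.tendsto z).mono_left (nhdsWithin_le_nhds (s := {z}ᶜ))
    have hval : ∑ k ∈ Finset.range (n + 1), (z - z) ^ (n - k) • (T ^ k) x = (T ^ n) x := by
      rw [Finset.sum_range_succ]
      have h0 : ∀ k ∈ Finset.range n, (z - z) ^ (n - k) • (T ^ k) x = 0 := by
        intro k hk
        have : n - k ≠ 0 := by have := Finset.mem_range.mp hk; omega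
        rw [sub_self, zero_pow this, zero_smul]
      rw [Finset.sum_eq_zero h0, zero_add, Nat.sub_self, pow_zero, one_smul]
    rwa [hval] at h3
  have heq : ∀ᶠ μ in 𝓝[≠] z, (μ - z) ^ (n + 1) • (resolvent A μ) x
      = ∑ k ∈ Finset.range (n + 1), (μ - z) ^ (n - k) • (T ^ k) x := by
    filter_upwards [hres] with μ hμ
    exact hid μ hμ
  exact tendsto_nhds_unique ((tendsto_congr' heq).mpr htendsum) htendzero



lemma range_le_of_pole (A : X →L[ℂ] X) (z : ℂ) {n : ℕ} (hn : 0 < n) {r : ℝ} (hr : 0 < r)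
    (hres : ∀ μ ∈ ball z r \ {z}, μ ∈ resolventSet ℂ A)
    {C : ℝ} (hQb : ∀ μ ∈ ball z r \ {z}, ‖(μ - z) ^ n • resolvent A μ‖ ≤ C) :
    LinearMap.range ((((A - z • 1) ^ n) : X →L[ℂ] X) : X →ₗ[ℂ] X) ≤ LinearMap.range ((((A - z • 1) ^ (n + 1)) : X →L[ℂ] X) : X →ₗ[ℂ] X) := by
  classical
  set T : X →L[ℂ] X := A - z • 1 with hT
  set B : Set ℂ := ball z r with hB
  have hBz : B ∈ 𝓝 z := isOpen_ball.mem_nhds (mem_ball_self hr)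
  set Q : ℂ → (X →L[ℂ] X) := fun μ => (μ - z) ^ n • resolvent A μ with hQ
  have hQd : DifferentiableOn ℂ Q (B \ {z}) := by
    refine DifferentiableOn.fun_smul ?_ ?_
    · exact ((differentiable_id.sub_const z).pow n).differentiableOn
    · intro μ hμ
      exact ((spectrum.hasDerivAt_resolvent (hres μ hμ)).differentiableAt).differentiableWithinAt
  have hQbdd : BddAbove (norm ∘ Q '' (B \ {z})) := by
    refine ⟨C, ?_⟩
    rintro y ⟨μ, hμ, rfl⟩
    exact hQb μ hμ
  set F : ℂ → (X →L[ℂ] X) := Function.update Q z (limUnder (𝓝[≠] z) Q) with hF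
  have hFd : DifferentiableOn ℂ F B :=
    Complex.differentiableOn_update_limUnder_of_bddAbove hBz hQd hQbdd
  have hFQ : ∀ μ : ℂ, μ ≠ z → F μ = Q μ := fun μ h => Function.update_of_ne h _ _
  set g : ℕ → ℂ → (X →L[ℂ] X) := fun k => (fun f => dslope f z)^[k] F with hg
  have hg0 : g 0 = F := rfl
  have hgsucc : ∀ k, g (k + 1) = dslope (g k) z := fun k => Function.iterate_succ_apply' _ _ _
  have hgd : ∀ k, DifferentiableOn ℂ (g k) B := by
    intro k
    induction k with
    | zero => exact hFd
    | succ k ih =>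
      rw [hgsucc k]
      exact (Complex.differentiableOn_dslope hBz).mpr ih
  have hgc : ∀ k, ContinuousAt (g k) z := fun k =>
    ((hgd k).differentiableAt hBz).continuousAt
  -- the constants
  set Cop : ℕ → (X →L[ℂ] X) := fun k => match k with
    | 0 => 0
    | (j + 1) => g j z
  -- extension-by-continuity helper
  have hext : ∀ (G : ℂ → (X →L[ℂ] X)) (D : X →L[ℂ] X) (m : ℕ),
      ContinuousAt G z →
      (∀ μ ∈ B, μ ≠ z → ((μ - z) • (1 : X →L[ℂ] X) - T) * G μ = (μ - z) ^ m • 1 - D) →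
      ∀ μ ∈ B, ((μ - z) • (1 : X →L[ℂ] X) - T) * G μ = (μ - z) ^ m • 1 - D := by
    intro G D m hG hne μ hμB
    rcases eq_or_ne μ z with hμz | hμz
    · rw [hμz]
      have hφ : ContinuousAt (fun ν : ℂ => ((ν - z) • (1 : X →L[ℂ] X) - T) * G ν) z := by
        refine ContinuousAt.mul ?_ hG
        exact (((continuous_id.sub continuous_const).smul continuous_const).sub
          continuous_const).continuousAt
      have hψ : ContinuousAt (fun ν : ℂ => (ν - z) ^ m • (1 : X →L[ℂ] X) - D) z := by
        exact ((((continuous_id.sub continuous_const).pow m).smul continuous_const).sub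
          continuous_const).continuousAt
      have hev : ∀ᶠ ν in 𝓝[≠] z, ((ν - z) • (1 : X →L[ℂ] X) - T) * G ν
          = (ν - z) ^ m • (1 : X →L[ℂ] X) - D := by
        filter_upwards [mem_nhdsWithin_of_mem_nhds hBz, self_mem_nhdsWithin] with ν hνB hνz
        exact hne ν hνB hνz
      exact eq_at_of_eventually_eq hφ hψ hev
    · exact hne μ hμB hμz
  -- the main induction
  have Ident : ∀ k, k ≤ n → ∀ μ ∈ B,
      ((μ - z) • (1 : X →L[ℂ] X) - T) * g k μ = (μ - z) ^ (n - k) • 1 - Cop k := by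
    intro k
    induction k with
    | zero =>
      intro _ μ hμB
      refine hext (g 0) (Cop 0) (n - 0) (hgc 0) ?_ μ hμB
      intro ν hνB hνz
      rw [hg0, hFQ ν hνz]
      show ((ν - z) • (1 : X →L[ℂ] X) - T) * ((ν - z) ^ n • resolvent A ν)
        = (ν - z) ^ (n - 0) • 1 - Cop 0
      have halg : (ν - z) • (1 : X →L[ℂ] X) - T = algebraMap ℂ (X →L[ℂ] X) ν - A :=
        (alg_sub A z ν).symm
      rw [halg]
      have hres' : IsUnit (algebraMap ℂ (X →L[ℂ] X) ν - A) := hres ν ⟨hνB, hνz⟩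
      have hrv : resolvent A ν = Ring.inverse (algebraMap ℂ (X →L[ℂ] X) ν - A) := rfl
      rw [hrv, mul_smul_comm, Ring.mul_inverse_cancel _ hres']
      show (ν - z) ^ n • (1 : X →L[ℂ] X) = (ν - z) ^ (n - 0) • 1 - 0
      rw [Nat.sub_zero, sub_zero]
    | succ k ih =>
      intro hk1 μ hμB
      have hkn : k ≤ n := by omega
      have hIk := ih hkn
      -- evaluate the k-th identity at z to get `T * g k z = Cop k`
      have hTBk : T * g k z = Cop k := by
        have h1 := hIk z (mem_of_mem_nhds hBz)
        rw [sub_self, zero_smul, zero_sub, zero_pow (by omega : n - k ≠ 0), zero_smul,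
          zero_sub, neg_mul] at h1
        exact neg_injective h1
      refine hext (g (k + 1)) (Cop (k + 1)) (n - (k + 1)) (hgc (k + 1)) ?_ μ hμB
      intro ν hνB hνz
      rw [hgsucc k, dslope_of_ne _ hνz, slope_def_module]
      have hIkν := hIk ν hνB
      have hinv : (ν - z) ≠ 0 := sub_ne_zero.mpr hνz
      calc ((ν - z) • (1 : X →L[ℂ] X) - T) * ((ν - z)⁻¹ • (g k ν - g k z))
          = (ν - z)⁻¹ • (((ν - z) • (1 : X →L[ℂ] X) - T) * g k ν
              - ((ν - z) • (1 : X →L[ℂ] X) - T) * g k z) := by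
            rw [mul_smul_comm, mul_sub]
        _ = (ν - z)⁻¹ • ((ν - z) ^ (n - k) • (1 : X →L[ℂ] X) - Cop k
              - ((ν - z) • g k z - Cop k)) := by
            rw [hIkν, sub_mul, smul_mul_assoc, one_mul, hTBk]
        _ = (ν - z)⁻¹ • ((ν - z) ^ (n - k) • (1 : X →L[ℂ] X) - (ν - z) • g k z) := by
            congr 1
            abel
        _ = (ν - z) ^ (n - (k + 1)) • (1 : X →L[ℂ] X) - g k z := by
            rw [smul_sub, smul_smul, smul_smul, inv_mul_cancel₀ hinv, one_smul,
              show (n - k) = (n - (k + 1)) + 1 by omega, pow_succ',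
              show (ν - z)⁻¹ * ((ν - z) * (ν - z) ^ (n - (k + 1)))
                = (ν - z) ^ (n - (k + 1)) by
                  rw [← mul_assoc, inv_mul_cancel₀ hinv, one_mul]]
        _ = (ν - z) ^ (n - (k + 1)) • (1 : X →L[ℂ] X) - Cop (k + 1) := rfl
  -- evaluate the n-th identity at z
  have hfinal : T * g n z = Cop n - 1 := by
    have h1 := Ident n le_rfl z (mem_of_mem_nhds hBz)
    rw [sub_self, zero_smul, zero_sub, Nat.sub_self, pow_zero, one_smul, neg_mul] at h1
    have := neg_injective (by rw [h1]; abel : -(T * g n z) = -(Cop n - 1))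
    exact this
  -- the chain `T^k * Cop k = 0`
  have hchain : ∀ k, k ≤ n → (T ^ k) * Cop k = 0 := by
    intro k
    induction k with
    | zero => intro _; simp; rfl
    | succ k ih =>
      intro hk1
      have hTBk : T * Cop (k + 1) = Cop k := by
        have h1 := Ident k (by omega) z (mem_of_mem_nhds hBz)
        rw [sub_self, zero_smul, zero_sub, zero_pow (by omega : n - k ≠ 0), zero_smul,
          zero_sub, neg_mul] at h1
        exact neg_injective h1
      rw [pow_succ, mul_assoc, hTBk, ih (by omega)]
  -- conclude
  have hkey : (T ^ n) = (T ^ (n + 1)) * (-(g n z)) := by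
    have h1 : (T ^ (n + 1)) * g n z = (T ^ n) * (T * g n z) := by
      rw [pow_succ, mul_assoc]
    have h2 : (T ^ (n + 1)) * g n z = -(T ^ n) := by
      rw [h1, hfinal, mul_sub, hchain n le_rfl, mul_one, zero_sub]
    rw [mul_neg, h2, neg_neg]
  rintro y ⟨x, rfl⟩
  refine clm_mem_range.mpr ⟨-(g n z) x, ?_⟩
  calc (T ^ (n + 1)) (-(g n z) x) = ((T ^ (n + 1)) * (-(g n z))) x := rfl
    _ = (T ^ n) x := by rw [← hkey]


end Aux

set_option maxHeartbeats 1600000 in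
set_option synthInstance.maxHeartbeats 400000 in
/-- `λ ∈ σ(A)` is a pole of the resolvent iff `asc(A-λ) = dsc(A-λ) < ∞`. -/
theorem hasResolventPoleAt_iff (A : X →L[ℂ] X) (z : ℂ) (hz : z ∈ spectrum ℂ A) :
    HasResolventPoleAt A z ↔
      (ascent (A - z • 1) = descent (A - z • 1) ∧ ascent (A - z • 1) ≠ ⊤) := by
  classical
  set T : X →L[ℂ] X := A - z • 1 with hT
  set Sk : Set ℕ := {m : ℕ | LinearMap.ker (((T ^ m) : X →L[ℂ] X) : X →ₗ[ℂ] X) = LinearMap.ker (((T ^ (m + 1)) : X →L[ℂ] X) : X →ₗ[ℂ] X)} with hSk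
  set Sr : Set ℕ := {m : ℕ | LinearMap.range (((T ^ m) : X →L[ℂ] X) : X →ₗ[ℂ] X) = LinearMap.range (((T ^ (m + 1)) : X →L[ℂ] X) : X →ₗ[ℂ] X)} with hSr
  have haT : ascent T = sInf ((((↑) : ℕ → ℕ∞)) '' Sk) := rfl
  have hdT : descent T = sInf ((((↑) : ℕ → ℕ∞)) '' Sr) := rfl
  constructor
  · -- pole implies equal finite ascent and descent
    rintro ⟨⟨hzσ, hbot⟩, n, hn, hO⟩
    -- eventually in the punctured neighbourhood we are in the resolvent set
    have hres_ev : ∀ᶠ μ in 𝓝[≠] z, μ ∈ resolventSet ℂ A := by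
      have hle : 𝓝[≠] z ≤ 𝓝[spectrum ℂ A \ {z}] z ⊔ 𝓝[(spectrum ℂ A)ᶜ] z := by
        rw [← nhdsWithin_union]
        refine nhdsWithin_mono z ?_
        intro μ hμ
        by_cases hμσ : μ ∈ spectrum ℂ A
        · exact Or.inl ⟨hμσ, hμ⟩
        · exact Or.inr hμσ
      rw [hbot, bot_sup_eq] at hle
      have hmem : (spectrum ℂ A)ᶜ ∈ 𝓝[(spectrum ℂ A)ᶜ] z := self_mem_nhdsWithin
      have : (spectrum ℂ A)ᶜ ∈ 𝓝[≠] z := hle hmem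
      have hcompl : (spectrum ℂ A)ᶜ = resolventSet ℂ A := compl_compl _
      rw [hcompl] at this
      exact this
    obtain ⟨C, hC⟩ := hO.bound
    have hCb : ∀ᶠ μ in 𝓝[≠] z, ‖(μ - z) ^ n • resolvent A μ‖ ≤ C := by
      filter_upwards [hC] with μ h
      simpa using h
    have hball : ∃ rr > (0 : ℝ), ∀ μ ∈ ball z rr \ {z},
        μ ∈ resolventSet ℂ A ∧ ‖(μ - z) ^ n • resolvent A μ‖ ≤ C := by
      have hmem : {μ : ℂ | μ ∈ resolventSet ℂ A ∧ ‖(μ - z) ^ n • resolvent A μ‖ ≤ C}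
          ∈ 𝓝[≠] z := hres_ev.and hCb
      rw [Metric.mem_nhdsWithin_iff] at hmem
      obtain ⟨rr, hrr, hsub⟩ := hmem
      refine ⟨rr, hrr, ?_⟩
      intro μ hμ
      exact hsub (by rwa [← Set.diff_eq])
    obtain ⟨rr, hrr, hrprop⟩ := hball
    have hkn : LinearMap.ker (((T ^ n) : X →L[ℂ] X) : X →ₗ[ℂ] X) = LinearMap.ker (((T ^ (n + 1)) : X →L[ℂ] X) : X →ₗ[ℂ] X) := by
      refine le_antisymm ?_ (ker_le_of_pole A z hres_ev hO)
      intro x hx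
      rw [clm_mem_ker] at hx ⊢
      rw [show n + 1 = 1 + n by omega, pow_add_apply, hx, map_zero]
    have hrn : LinearMap.range (((T ^ n) : X →L[ℂ] X) : X →ₗ[ℂ] X) = LinearMap.range (((T ^ (n + 1)) : X →L[ℂ] X) : X →ₗ[ℂ] X) := by
      refine le_antisymm
        (range_le_of_pole A z hn hrr (fun μ hμ => (hrprop μ hμ).1)
          (fun μ hμ => (hrprop μ hμ).2)) ?_
      rintro y ⟨x, rfl⟩
      exact ⟨T x, by show (T ^ n) (T x) = (T ^ (n + 1)) x; rw [← ContinuousLinearMap.mul_apply, ← pow_succ]⟩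
    have hSkNe : Sk.Nonempty := ⟨n, hkn⟩
    have hSrNe : Sr.Nonempty := ⟨n, hrn⟩
    have hpq : sInf Sk ≤ sInf Sr :=
      Nat.sInf_le (ker_stab_at_range_point T (Nat.sInf_mem hSkNe) (Nat.sInf_mem hSrNe))
    have hqp : sInf Sr ≤ sInf Sk :=
      Nat.sInf_le (range_stab_at_ker_point T (Nat.sInf_mem hSkNe) (Nat.sInf_mem hSrNe) hpq)
    have hpq' : sInf Sk = sInf Sr := le_antisymm hpq hqp
    refine ⟨?_, ?_⟩
    · rw [haT, hdT, sInf_coe_image hSkNe, sInf_coe_image hSrNe, hpq']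
    · rw [haT, sInf_coe_image hSkNe]
      exact WithTop.coe_ne_top
  · -- equal finite ascent and descent implies pole
    rintro ⟨heq, hne⟩
    have hSkNe : Sk.Nonempty := by
      by_contra h
      rw [Set.not_nonempty_iff_eq_empty] at h
      refine hne ?_
      rw [haT, h]
      simp
    have ha : ascent T = ((sInf Sk : ℕ) : ℕ∞) := by rw [haT, sInf_coe_image hSkNe]
    have hSrNe : Sr.Nonempty := by
      by_contra h
      rw [Set.not_nonempty_iff_eq_empty] at h
      rw [heq, hdT, h] at ha
      simp at ha
    have hd : descent T = ((sInf Sr : ℕ) : ℕ∞) := by rw [hdT, sInf_coe_image hSrNe]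
    have hps : sInf Sk = sInf Sr := by
      have : ((sInf Sk : ℕ) : ℕ∞) = ((sInf Sr : ℕ) : ℕ∞) := by rw [← ha, heq, hd]
      exact_mod_cast this
    set p : ℕ := sInf Sk with hp
    have hkp : LinearMap.ker (((T ^ p) : X →L[ℂ] X) : X →ₗ[ℂ] X) = LinearMap.ker (((T ^ (p + 1)) : X →L[ℂ] X) : X →ₗ[ℂ] X) := Nat.sInf_mem hSkNe
    have hrp : LinearMap.range (((T ^ p) : X →L[ℂ] X) : X →ₗ[ℂ] X) = LinearMap.range (((T ^ (p + 1)) : X →L[ℂ] X) : X →ₗ[ℂ] X) := by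
      have := Nat.sInf_mem hSrNe
      rw [← hps] at this
      exact this
    -- p is positive, since z is in the spectrum
    have hppos : 0 < p := by
      rcases Nat.eq_zero_or_pos p with h0 | hpos
      · exfalso
        have hker1 : LinearMap.ker (T : X →ₗ[ℂ] X) = ⊥ := by
          have := hkp
          rw [h0, pow_zero, zero_add, pow_one] at this
          rw [← this]
          exact clm_ker_eq_bot'.mpr fun m hm => hm
        have hrange1 : LinearMap.range (T : X →ₗ[ℂ] X) = ⊤ := by
          have := hrp
          rw [h0, pow_zero, zero_add, pow_one] at this
          rw [← this, clm_range_eq_top]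
          intro x
          exact ⟨x, ContinuousLinearMap.one_apply x⟩
        let eT := ContinuousLinearEquiv.ofBijective T hker1 hrange1
        have heT : (⇑eT : X → X) = ⇑T := ContinuousLinearEquiv.coeFn_ofBijective _ _ _
        have hTU : IsUnit T := by
          refine ⟨⟨T, (eT.symm : X →L[ℂ] X), ?_, ?_⟩, rfl⟩
          · ext x
            simp only [ContinuousLinearMap.mul_apply, ContinuousLinearMap.one_apply,
              ContinuousLinearEquiv.coe_coe]
            rw [show T (eT.symm x) = eT (eT.symm x) from (congrFun heT _).symm]
            exact eT.apply_symm_apply x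
          · ext x
            simp only [ContinuousLinearMap.mul_apply, ContinuousLinearMap.one_apply,
              ContinuousLinearEquiv.coe_coe]
            rw [show T x = eT x from (congrFun heT _).symm]
            exact eT.symm_apply_apply x
        have halg : algebraMap ℂ (X →L[ℂ] X) z - A = -T := by
          rw [alg_sub A z z, ← hT]
          simp
        exact (spectrum.mem_iff.mp hz) (halg ▸ hTU.neg)
      · exact hpos
    obtain ⟨δ, hδ, C, hC⟩ := main_construction T hppos hkp hrp
    have hresolv : ∀ μ : ℂ, μ ≠ z → ‖μ - z‖ < δ → μ ∈ resolventSet ℂ A := by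
      intro μ hμz hμδ
      have h1 := (hC (μ - z) (sub_ne_zero.mpr hμz) hμδ).1
      show IsUnit (algebraMap ℂ (X →L[ℂ] X) μ - A)
      rw [alg_sub A z μ, ← hT]
      exact h1
    constructor
    · -- z is an isolated point of the spectrum
      refine ⟨hz, ?_⟩
      rw [← Filter.empty_mem_iff_bot]
      rw [mem_nhdsWithin]
      refine ⟨ball z δ, isOpen_ball, mem_ball_self hδ, ?_⟩
      rintro μ ⟨hμball, hμσ, hμz⟩
      have hμz' : μ ≠ z := hμz
      have : μ ∈ resolventSet ℂ A := by
        refine hresolv μ hμz' ?_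
        rw [mem_ball, dist_eq_norm] at hμball
        exact hμball
      exact hμσ this
    · -- the pole estimate, of order p
      refine ⟨p, hppos, ?_⟩
      rw [Asymptotics.isBigO_iff]
      refine ⟨C, ?_⟩
      filter_upwards [mem_nhdsWithin_of_mem_nhds (ball_mem_nhds z hδ), self_mem_nhdsWithin]
        with μ hμball hμz
      have hμz' : (μ : ℂ) ≠ z := hμz
      have hμδ : ‖μ - z‖ < δ := by rwa [mem_ball, dist_eq_norm] at hμball
      have h1 := (hC (μ - z) (sub_ne_zero.mpr hμz') hμδ).2
      have hres_eq : resolvent A μ = Ring.inverse ((μ - z) • (1 : X →L[ℂ] X) - T) := by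
        have : resolvent A μ = Ring.inverse (algebraMap ℂ (X →L[ℂ] X) μ - A) := rfl
        rw [this, alg_sub A z μ, ← hT]
      have hμpos : (0 : ℝ) < ‖μ - z‖ ^ p := pow_pos (norm_pos_iff.mpr (sub_ne_zero.mpr hμz')) p
      calc ‖(μ - z) ^ p • resolvent A μ‖ = ‖(μ - z) ^ p‖ * ‖resolvent A μ‖ := by
            exact norm_smul ((μ - z) ^ p) (resolvent A μ)
        _ = ‖μ - z‖ ^ p * ‖resolvent A μ‖ := by rw [norm_pow]
        _ ≤ ‖μ - z‖ ^ p * (C / ‖μ - z‖ ^ p) := by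
            refine mul_le_mul_of_nonneg_left ?_ (le_of_lt hμpos)
            rw [hres_eq]
            exact h1
        _ = C := by rw [mul_comm, div_mul_cancel₀ C (ne_of_gt hμpos)]
        _ ≤ C * ‖(1 : ℝ)‖ := by simp


end Paper
end

section
/- If A ∈ B(X) is a-polaroid then iso σ_a(A) = iso σ(A). -/
open Filter Metric Set Asymptotics Topology

namespace Paper

variable {X : Type*} [NormedAddCommGroup X] [NormedSpace ℂ X] [CompleteSpace X]

section AuxiliaryLemmas

private lemma pow_apply_add' (S : X →L[ℂ] X) (i j : ℕ) (x : X) :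
    (S ^ (i + j)) x = (S ^ i) ((S ^ j) x) := by
  rw [pow_add]; rfl

private lemma ker_pow_stab (S : X →L[ℂ] X) {n : ℕ}
    (h : LinearMap.ker ((S ^ n : X →L[ℂ] X) : X →ₗ[ℂ] X) = LinearMap.ker ((S ^ (n + 1) : X →L[ℂ] X) : X →ₗ[ℂ] X)) :
    ∀ m, LinearMap.ker ((S ^ (n + m) : X →L[ℂ] X) : X →ₗ[ℂ] X) = LinearMap.ker ((S ^ n : X →L[ℂ] X) : X →ₗ[ℂ] X) := by
  intro m
  induction m with
  | zero => rfl
  | succ m ih =>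
    refine le_antisymm ?_ ?_
    · intro x hx
      have hx' : (S ^ m) x ∈ LinearMap.ker ((S ^ (n + 1) : X →L[ℂ] X) : X →ₗ[ℂ] X) := by
        rw [LinearMap.mem_ker, ContinuousLinearMap.coe_coe, ← pow_apply_add']
        have e : n + 1 + m = n + (m + 1) := by ring
        rw [e]
        exact LinearMap.mem_ker.mp hx
      rw [← h] at hx'
      have hx'' : x ∈ LinearMap.ker ((S ^ (n + m) : X →L[ℂ] X) : X →ₗ[ℂ] X) := by
        rw [LinearMap.mem_ker, ContinuousLinearMap.coe_coe, pow_apply_add']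
        exact LinearMap.mem_ker.mp hx'
      rw [← ih]
      exact hx''
    · intro x hx
      rw [LinearMap.mem_ker, ContinuousLinearMap.coe_coe]
      rw [LinearMap.mem_ker, ContinuousLinearMap.coe_coe] at hx
      have e : n + (m + 1) = (m + 1) + n := by ring
      rw [e, pow_apply_add', hx, map_zero]

private lemma range_pow_stab (S : X →L[ℂ] X) {n : ℕ}
    (h : LinearMap.range ((S ^ n : X →L[ℂ] X) : X →ₗ[ℂ] X) = LinearMap.range ((S ^ (n + 1) : X →L[ℂ] X) : X →ₗ[ℂ] X)) :
    ∀ m, LinearMap.range ((S ^ (n + m) : X →L[ℂ] X) : X →ₗ[ℂ] X) = LinearMap.range ((S ^ n : X →L[ℂ] X) : X →ₗ[ℂ] X) := by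
  intro m
  induction m with
  | zero => rfl
  | succ m ih =>
    refine le_antisymm ?_ ?_
    · rintro x ⟨y, rfl⟩
      exact ⟨(S ^ (m + 1)) y, (pow_apply_add' S n (m + 1) y).symm⟩
    · intro x hx
      obtain ⟨y, hy⟩ : x ∈ LinearMap.range ((S ^ (n + m) : X →L[ℂ] X) : X →ₗ[ℂ] X) := by rw [ih]; exact hx
      obtain ⟨z, hz⟩ : (S ^ n) y ∈ LinearMap.range ((S ^ (n + 1) : X →L[ℂ] X) : X →ₗ[ℂ] X) := by
        rw [← h]; exact ⟨y, rfl⟩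
      refine ⟨z, ?_⟩
      rw [ContinuousLinearMap.coe_coe] at hz
      have e : n + (m + 1) = m + (n + 1) := by ring
      rw [e, ContinuousLinearMap.coe_coe, pow_apply_add', hz]
      calc (S ^ m) ((S ^ n) y) = (S ^ (m + n)) y := (pow_apply_add' S m n y).symm
        _ = (S ^ (n + m)) y := by rw [Nat.add_comm]
        _ = x := hy

/-- Lift of a continuous linear map vanishing on `N` to the quotient. -/
private noncomputable def qlift {Y : Type*} [SeminormedAddCommGroup Y] [NormedSpace ℂ Y]
    (N : Submodule ℂ X) (f : X →L[ℂ] Y) (hf : ∀ x ∈ N, f x = 0) : (X ⧸ N) →L[ℂ] Y :=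
  LinearMap.mkContinuous (N.liftQ (f : X →ₗ[ℂ] Y) fun x hx => LinearMap.mem_ker.mpr (hf x hx))
    ‖f‖ (by
      intro q
      refine le_of_forall_pos_le_add fun ε hε => ?_
      have hδ : (0 : ℝ) < ε / (‖f‖ + 1) :=
        div_pos hε (by positivity)
      obtain ⟨m, hm, hmlt⟩ := Submodule.Quotient.norm_mk_lt q hδ
      have happ : N.liftQ (f : X →ₗ[ℂ] Y) (fun x hx => LinearMap.mem_ker.mpr (hf x hx)) q = f m := by
        rw [← hm]; rfl
      rw [happ]
      have h1 : ‖f m‖ ≤ ‖f‖ * ‖m‖ := f.le_opNorm m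
      have h2 : ‖f‖ * ‖m‖ ≤ ‖f‖ * (‖q‖ + ε / (‖f‖ + 1)) :=
        mul_le_mul_of_nonneg_left (le_of_lt hmlt) (norm_nonneg f)
      have h3 : ‖f‖ * (ε / (‖f‖ + 1)) ≤ ε := by
        rw [mul_div_assoc']
        rw [div_le_iff₀ (by positivity : (0:ℝ) < ‖f‖ + 1)]
        nlinarith [norm_nonneg f, le_of_lt hε]
      nlinarith [norm_nonneg f])

private lemma qlift_mk {Y : Type*} [SeminormedAddCommGroup Y] [NormedSpace ℂ Y]
    (N : Submodule ℂ X) (f : X →L[ℂ] Y) (hf : ∀ x ∈ N, f x = 0) (x : X) :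
    qlift N f hf (Submodule.Quotient.mk x) = f x := rfl

end AuxiliaryLemmas
private lemma isUnit_sub_smul_of_stab (S : X →L[ℂ] X) {d : ℕ}
    (hk : LinearMap.ker ((S ^ d : X →L[ℂ] X) : X →ₗ[ℂ] X) = LinearMap.ker ((S ^ (d + 1) : X →L[ℂ] X) : X →ₗ[ℂ] X))
    (hr : LinearMap.range ((S ^ d : X →L[ℂ] X) : X →ₗ[ℂ] X) = LinearMap.range ((S ^ (d + 1) : X →L[ℂ] X) : X →ₗ[ℂ] X)) :
    ∃ ε > (0 : ℝ), ∀ c : ℂ, c ≠ 0 → ‖c‖ < ε → IsUnit (S - c • 1) := by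
  classical
  set N : Submodule ℂ X := LinearMap.ker ((S ^ d : X →L[ℂ] X) : X →ₗ[ℂ] X) with hN
  set R : Submodule ℂ X := LinearMap.range ((S ^ d : X →L[ℂ] X) : X →ₗ[ℂ] X) with hRdef
  have hk2 : LinearMap.ker ((S ^ (d + d) : X →L[ℂ] X) : X →ₗ[ℂ] X) = N := ker_pow_stab S hk d
  have hr2 : LinearMap.range ((S ^ (d + d) : X →L[ℂ] X) : X →ₗ[ℂ] X) = R := range_pow_stab S hr d
  haveI hNc : IsClosed (N : Set X) := ContinuousLinearMap.isClosed_ker (S ^ d)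
  -- the quotient projection as a continuous linear map
  let π : X →L[ℂ] (X ⧸ N) := LinearMap.mkContinuous N.mkQ 1
    (fun x => by simpa using Submodule.Quotient.norm_mk_le N x)
  have hπ : ∀ x : X, π x = Submodule.Quotient.mk x := fun x => rfl
  -- the induced map θ on the quotient
  have hθ0 : ∀ x ∈ N, (π.comp (S ^ d)) x = 0 := by
    intro x hx
    have hxd : (S ^ d) x ∈ N := by
      rw [hN, LinearMap.mem_ker, ContinuousLinearMap.coe_coe, ← pow_apply_add']
      have : x ∈ LinearMap.ker ((S ^ (d + d) : X →L[ℂ] X) : X →ₗ[ℂ] X) := by rw [hk2]; exact hx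
      exact LinearMap.mem_ker.mp this
    show π ((S ^ d) x) = 0
    rw [hπ, Submodule.Quotient.mk_eq_zero]
    exact hxd
  let θ : (X ⧸ N) →L[ℂ] (X ⧸ N) := qlift N (π.comp (S ^ d)) hθ0
  have hθmk : ∀ x : X, θ (Submodule.Quotient.mk x) = Submodule.Quotient.mk ((S ^ d) x) :=
    fun x => rfl
  -- the lift ρ of S^d itself
  have hρ0 : ∀ x ∈ N, (S ^ d) x = 0 := fun x hx => LinearMap.mem_ker.mp hx
  let ρ : (X ⧸ N) →L[ℂ] X := qlift N (S ^ d) hρ0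
  have hρmk : ∀ x : X, ρ (Submodule.Quotient.mk x) = (S ^ d) x := fun x => rfl
  -- θ is bijective
  have hθker : θ.ker = ⊥ := by
    rw [Submodule.eq_bot_iff]
    intro q hq
    obtain ⟨x, rfl⟩ := Submodule.Quotient.mk_surjective N q
    have h1 : (S ^ d) x ∈ N := by
      rw [← Submodule.Quotient.mk_eq_zero, ← hθmk]
      exact LinearMap.mem_ker.mp hq
    have h2 : x ∈ N := by
      rw [← hk2, LinearMap.mem_ker, ContinuousLinearMap.coe_coe, pow_apply_add']
      exact LinearMap.mem_ker.mp h1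
    rwa [Submodule.Quotient.mk_eq_zero]
  have hθrange : θ.range = ⊤ := by
    rw [Submodule.eq_top_iff']
    intro q
    obtain ⟨x, rfl⟩ := Submodule.Quotient.mk_surjective N q
    obtain ⟨w, hw⟩ : (S ^ d) x ∈ LinearMap.range ((S ^ (d + d) : X →L[ℂ] X) : X →ₗ[ℂ] X) := by
      rw [hr2]; exact ⟨x, rfl⟩
    refine ⟨Submodule.Quotient.mk w, ?_⟩
    rw [ContinuousLinearMap.coe_coe, hθmk, Submodule.Quotient.eq]
    rw [hN, LinearMap.mem_ker, ContinuousLinearMap.coe_coe, map_sub]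
    rw [ContinuousLinearMap.coe_coe] at hw
    have : (S ^ d) ((S ^ d) w) = (S ^ d) x := by rw [← pow_apply_add', hw]
    rw [this, sub_self]
  let e : (X ⧸ N) ≃L[ℂ] (X ⧸ N) := ContinuousLinearEquiv.ofBijective θ hθker hθrange
  -- R is the fixed point set of the continuous map g, hence closed
  let g : X → X := fun x => ρ (e.symm (π x))
  have hgcont : Continuous g :=
    ρ.continuous.comp ((e.symm.continuous).comp π.continuous)
  have hgfix : ∀ x : X, x ∈ R ↔ g x = x := by
    intro x
    constructor
    · rintro ⟨y, rfl⟩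
      have h1 : π ((S ^ d) y) = θ (Submodule.Quotient.mk y) := by rw [hθmk, hπ]
      show ρ (e.symm (π ((S ^ d) y))) = (S ^ d) y
      rw [h1]
      have h2 : e.symm (θ (Submodule.Quotient.mk y)) = Submodule.Quotient.mk y :=
        ContinuousLinearEquiv.ofBijective_symm_apply_apply θ hθker hθrange _
      rw [h2, hρmk]
    · intro hx
      rw [← hx]
      obtain ⟨m, hm⟩ := Submodule.Quotient.mk_surjective N (e.symm (π x))
      show ρ (e.symm (π x)) ∈ R
      rw [← hm, hρmk]
      exact ⟨m, rfl⟩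
  have hRc : IsClosed (R : Set X) := by
    have : (R : Set X) = {x : X | g x = x} := Set.ext fun x => hgfix x
    rw [this]
    exact isClosed_eq hgcont continuous_id
  haveI : CompleteSpace R := hRc.completeSpace_coe
  -- the restriction of S to R
  have hmaps : ∀ x : R, (S.comp R.subtypeL) x ∈ R := by
    rintro ⟨x, y, rfl⟩
    show S ((S ^ d) y) ∈ R
    have h1 : S ((S ^ d) y) = (S ^ (d + 1)) y := by
      have : (S ^ (1 + d)) y = (S ^ 1) ((S ^ d) y) := pow_apply_add' S 1 d y
      rw [pow_one] at this
      rw [← this]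
      congr 1
      ring
    rw [h1]
    have hy : (S ^ (d + 1)) y ∈ LinearMap.range ((S ^ (d + 1) : X →L[ℂ] X) : X →ₗ[ℂ] X) := ⟨y, rfl⟩
    rw [← hr] at hy
    exact hy
  let SR : R →L[ℂ] R := (S.comp R.subtypeL).codRestrict R hmaps
  have hSRapp : ∀ x : R, ((SR x : X)) = S (x : X) := fun x => rfl
  have hSRker : SR.ker = ⊥ := by
    rw [Submodule.eq_bot_iff]
    rintro ⟨x, y, rfl⟩ hx
    have h0 : S ((S ^ d) y) = 0 := by
      have := LinearMap.mem_ker.mp hx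
      have h1 : ((SR ⟨(S ^ d) y, ⟨y, rfl⟩⟩ : R) : X) = (0 : X) := congrArg Subtype.val this
      rwa [hSRapp] at h1
    have h1 : (S ^ (d + 1)) y = 0 := by
      have e1 : (S ^ (1 + d)) y = (S ^ 1) ((S ^ d) y) := pow_apply_add' S 1 d y
      rw [pow_one] at e1
      have e2 : d + 1 = 1 + d := by ring
      rw [e2, e1, h0]
    have h2 : y ∈ N := by
      rw [hk]
      exact LinearMap.mem_ker.mpr h1
    have : (S ^ d) y = 0 := LinearMap.mem_ker.mp h2
    exact Subtype.ext this
  have hSRrange : SR.range = ⊤ := by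
    rw [Submodule.eq_top_iff']
    rintro ⟨x, hx⟩
    obtain ⟨z, hz⟩ : x ∈ LinearMap.range ((S ^ (d + 1) : X →L[ℂ] X) : X →ₗ[ℂ] X) := by
      rw [← hr]; exact hx
    refine ⟨⟨(S ^ d) z, ⟨z, rfl⟩⟩, ?_⟩
    apply Subtype.ext
    rw [ContinuousLinearMap.coe_coe, hSRapp]
    show S ((S ^ d) z) = x
    have e1 : (S ^ (1 + d)) z = (S ^ 1) ((S ^ d) z) := pow_apply_add' S 1 d z
    rw [pow_one] at e1
    rw [← e1]
    have e2 : 1 + d = d + 1 := by ring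
    rw [ContinuousLinearMap.coe_coe] at hz
    rw [e2, hz]
  let eR : R ≃L[ℂ] R := ContinuousLinearEquiv.ofBijective SR hSRker hSRrange
  set K : ℝ := ‖(eR.symm : R →L[ℂ] R)‖ with hK
  refine ⟨(K + 1)⁻¹, by positivity, ?_⟩
  intro c hc hcε
  -- bijectivity of SR - c•1 on R
  have hbijR : Function.Bijective ⇑(SR - c • (1 : R →L[ℂ] R)) := by
    rcases subsingleton_or_nontrivial R with hsub | hnt
    · exact ⟨fun a b _ => Subsingleton.elim a b, fun y => ⟨y, Subsingleton.elim _ _⟩⟩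
    · have hKpos : 0 < K := by
        rcases (norm_nonneg (eR.symm : R →L[ℂ] R)).lt_or_eq with h | h
        · exact h
        · exfalso
          have h0 : (eR.symm : R →L[ℂ] R) = 0 := (norm_eq_zero (E := R →L[ℂ] R)).mp h.symm
          obtain ⟨a, b, hab⟩ := exists_pair_ne R
          apply hab
          have ha : a = eR.symm (eR a) := (eR.symm_apply_apply a).symm
          have hb : b = eR.symm (eR b) := (eR.symm_apply_apply b).symm
          have ha' : eR.symm (eR a) = 0 := by
            show (eR.symm : R →L[ℂ] R) (eR a) = 0
            rw [h0]; rfl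
          have hb' : eR.symm (eR b) = 0 := by
            show (eR.symm : R →L[ℂ] R) (eR b) = 0
            rw [h0]; rfl
          rw [ha, hb, ha', hb']
      let u : (R →L[ℂ] R)ˣ :=
        { val := (eR : R →L[ℂ] R)
          inv := (eR.symm : R →L[ℂ] R)
          val_inv := by ext x; simp
          inv_val := by ext x; simp }
      have hcoe : (u : R →L[ℂ] R) = SR := ContinuousLinearEquiv.coe_ofBijective _ _ _
      have hinv : ((u⁻¹ : (R →L[ℂ] R)ˣ) : R →L[ℂ] R) = (eR.symm : R →L[ℂ] R) := rfl
      have hnear : ‖(SR - c • (1 : R →L[ℂ] R)) - (u : R →L[ℂ] R)‖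
          < ‖((u⁻¹ : (R →L[ℂ] R)ˣ) : R →L[ℂ] R)‖⁻¹ := by
        rw [hcoe, hinv, ← hK]
        have h1 : ‖(SR - c • (1 : R →L[ℂ] R)) - SR‖ ≤ ‖c‖ := by
          apply ContinuousLinearMap.opNorm_le_bound _ (norm_nonneg c)
          intro v
          have h3 : ((SR - c • (1 : R →L[ℂ] R)) - SR) v = -(c • v) := by
            rw [ContinuousLinearMap.sub_apply, ContinuousLinearMap.sub_apply,
              ContinuousLinearMap.smul_apply, ContinuousLinearMap.one_apply,
              sub_sub_cancel_left]
          rw [h3, norm_neg, norm_smul]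
        have h2 : (K + 1)⁻¹ < K⁻¹ := by
          apply inv_strictAnti₀ hKpos
          linarith
        calc ‖(SR - c • (1 : R →L[ℂ] R)) - SR‖ ≤ ‖c‖ := h1
          _ < (K + 1)⁻¹ := hcε
          _ < K⁻¹ := h2
      have : IsUnit (SR - c • (1 : R →L[ℂ] R)) := (Units.ofNearby (R := R →L[ℂ] R) u _ hnear).isUnit
      exact ContinuousLinearMap.isUnit_iff_bijective.mp this
  -- coercion computation on R
  have hcoe2 : ∀ v : R, (((SR - c • (1 : R →L[ℂ] R)) v : R) : X) = S (v : X) - c • (v : X) := by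
    intro v
    rw [ContinuousLinearMap.sub_apply]
    rw [Submodule.coe_sub]
    congr 1
  have happX : ∀ y : X, (S - c • (1 : X →L[ℂ] X)) y = S y - c • y := by
    intro y
    rw [ContinuousLinearMap.sub_apply, ContinuousLinearMap.smul_apply,
      ContinuousLinearMap.one_apply]
  -- injectivity on X
  have hker : LinearMap.ker ((S - c • (1 : X →L[ℂ] X) : X →L[ℂ] X) : X →ₗ[ℂ] X) = ⊥ := by
    rw [Submodule.eq_bot_iff]
    intro x hx
    have hSx : S x = c • x := by
      have h2 : S x - c • x = 0 := by
        rw [← happX]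
        exact LinearMap.mem_ker.mp hx
      exact sub_eq_zero.mp h2
    have hpow : ∀ m : ℕ, (S ^ m) x = c ^ m • x := by
      intro m
      induction m with
      | zero => simp
      | succ m ih =>
        have e1 : (S ^ (1 + m)) x = (S ^ 1) ((S ^ m) x) := pow_apply_add' S 1 m x
        rw [pow_one] at e1
        have e2 : m + 1 = 1 + m := by ring
        rw [e2, e1, ih, map_smul, hSx, smul_smul, mul_comm, ← pow_succ', Nat.add_comm 1 m]
    have hxR : x ∈ R := by
      have h3 : x = (c ^ d)⁻¹ • (S ^ d) x := by
        rw [hpow d, smul_smul, inv_mul_cancel₀ (pow_ne_zero d hc), one_smul]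
      rw [h3]
      exact R.smul_mem _ ⟨x, rfl⟩
    have h4 : (SR - c • (1 : R →L[ℂ] R)) ⟨x, hxR⟩ = 0 := by
      apply Subtype.ext
      rw [hcoe2 ⟨x, hxR⟩]
      show S x - c • x = (0 : X)
      rw [hSx, sub_self]
    have h5 : (⟨x, hxR⟩ : R) = 0 := hbijR.1 (h4.trans (map_zero _).symm)
    simpa using congrArg Subtype.val h5
  -- surjectivity on X
  have hrange2 : LinearMap.range ((S - c • (1 : X →L[ℂ] X) : X →L[ℂ] X) : X →ₗ[ℂ] X) = ⊤ := by
    rw [Submodule.eq_top_iff']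
    intro x
    obtain ⟨w, hw⟩ : (S ^ d) x ∈ LinearMap.range ((S ^ (d + d) : X →L[ℂ] X) : X →ₗ[ℂ] X) := by
      rw [hr2]; exact ⟨x, rfl⟩
    have hxr : (S ^ d) (x - (S ^ d) w) = 0 := by
      rw [map_sub]
      rw [ContinuousLinearMap.coe_coe] at hw
      have h5 : (S ^ d) ((S ^ d) w) = (S ^ d) x := by rw [← pow_apply_add', hw]
      rw [h5, sub_self]
    have hNrange : ∀ (j : ℕ) (y : X), (S ^ j) y = 0 →
        y ∈ LinearMap.range ((S - c • (1 : X →L[ℂ] X) : X →L[ℂ] X) : X →ₗ[ℂ] X) := by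
      intro j
      induction j with
      | zero =>
        intro y hy
        have h0 : y = 0 := by simpa using hy
        rw [h0]
        exact zero_mem _
      | succ j ih =>
        intro y hy
        have h1 : (S ^ j) (S y) = 0 := by
          have e1 : (S ^ (j + 1)) y = (S ^ j) ((S ^ 1) y) := pow_apply_add' S j 1 y
          rw [pow_one] at e1
          rw [← e1]
          exact hy
        obtain ⟨w', hw'⟩ := ih (S y) h1
        refine ⟨(-c⁻¹) • (y - w'), ?_⟩
        rw [ContinuousLinearMap.coe_coe] at hw'
        rw [ContinuousLinearMap.coe_coe, map_smul, map_sub, hw', happX, sub_sub_cancel_left, smul_neg, neg_smul, neg_neg,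
          smul_smul, inv_mul_cancel₀ hc, one_smul]
    obtain ⟨v, hv⟩ := hbijR.2 ⟨(S ^ d) w, ⟨w, rfl⟩⟩
    have hrr : (S ^ d) w ∈ LinearMap.range ((S - c • (1 : X →L[ℂ] X) : X →L[ℂ] X) : X →ₗ[ℂ] X) := by
      refine ⟨(v : X), ?_⟩
      have h6 := congrArg Subtype.val hv
      rw [hcoe2 v] at h6
      rw [ContinuousLinearMap.coe_coe, happX, h6]
    have hx2 := hNrange d (x - (S ^ d) w) hxr
    have hxsum : x = (x - (S ^ d) w) + (S ^ d) w := (sub_add_cancel x _).symm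
    rw [hxsum]
    exact add_mem hx2 hrr
  exact ContinuousLinearMap.isUnit_iff_bijective.mpr
    ⟨LinearMap.ker_eq_bot.mp hker, LinearMap.range_eq_top.mp hrange2⟩
private lemma pole_isolated (T : X →L[ℂ] X) {l : ℂ} (hl : l ∈ poles T) :
    𝓝[spectrum ℂ T \ {l}] l = ⊥ := by
  obtain ⟨hlσ, had, hne⟩ := hl
  set S : X →L[ℂ] X := T - l • 1 with hS
  have hdne : descent S ≠ ⊤ := by rw [← had]; exact hne
  have hkne : {n : ℕ | LinearMap.ker ((S ^ n : X →L[ℂ] X) : X →ₗ[ℂ] X) = LinearMap.ker ((S ^ (n + 1) : X →L[ℂ] X) : X →ₗ[ℂ] X)}.Nonempty := by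
    by_contra h
    rw [Set.not_nonempty_iff_eq_empty] at h
    apply hne
    unfold ascent
    rw [h, Set.image_empty, sInf_empty]
  have hrne : {n : ℕ | LinearMap.range ((S ^ n : X →L[ℂ] X) : X →ₗ[ℂ] X) = LinearMap.range ((S ^ (n + 1) : X →L[ℂ] X) : X →ₗ[ℂ] X)}.Nonempty := by
    by_contra h
    rw [Set.not_nonempty_iff_eq_empty] at h
    apply hdne
    unfold descent
    rw [h, Set.image_empty, sInf_empty]
  obtain ⟨a, ha⟩ := hkne
  obtain ⟨b, hb⟩ := hrne
  have hk : LinearMap.ker ((S ^ (max a b) : X →L[ℂ] X) : X →ₗ[ℂ] X) = LinearMap.ker ((S ^ (max a b + 1) : X →L[ℂ] X) : X →ₗ[ℂ] X) := by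
    have h1 := ker_pow_stab S ha (max a b - a)
    have h2 := ker_pow_stab S ha (max a b + 1 - a)
    rw [Nat.add_sub_cancel' (le_max_left a b)] at h1
    rw [Nat.add_sub_cancel' (le_trans (le_max_left a b) (Nat.le_succ _))] at h2
    rw [h1, h2]
  have hr : LinearMap.range ((S ^ (max a b) : X →L[ℂ] X) : X →ₗ[ℂ] X) = LinearMap.range ((S ^ (max a b + 1) : X →L[ℂ] X) : X →ₗ[ℂ] X) := by
    have h1 := range_pow_stab S hb (max a b - b)
    have h2 := range_pow_stab S hb (max a b + 1 - b)
    rw [Nat.add_sub_cancel' (le_max_right a b)] at h1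
    rw [Nat.add_sub_cancel' (le_trans (le_max_right a b) (Nat.le_succ _))] at h2
    rw [h1, h2]
  obtain ⟨ε, hε, hu⟩ := isUnit_sub_smul_of_stab S hk hr
  have hnotin : ∀ μ : ℂ, μ ≠ l → dist μ l < ε → μ ∉ spectrum ℂ T := by
    intro μ hμ hdist
    rw [spectrum.notMem_iff]
    have hc : μ - l ≠ 0 := sub_ne_zero.mpr hμ
    have hcn : ‖μ - l‖ < ε := by rwa [← dist_eq_norm μ l]
    have h1 : IsUnit (S - (μ - l) • (1 : X →L[ℂ] X)) := hu (μ - l) hc hcn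
    have h2 : S - (μ - l) • (1 : X →L[ℂ] X) = T - μ • 1 := by
      rw [hS, sub_sub, ← add_smul]
      congr 2
      ring
    rw [h2] at h1
    have h3 : algebraMap ℂ (X →L[ℂ] X) μ - T = -(T - μ • 1) := by
      rw [Algebra.algebraMap_eq_smul_one, neg_sub]
    rw [h3]
    exact h1.neg
  rw [← Filter.empty_mem_iff_bot]
  have hball : Metric.ball l ε ∈ 𝓝[spectrum ℂ T \ {l}] l :=
    nhdsWithin_le_nhds (Metric.ball_mem_nhds l hε)
  have hself : spectrum ℂ T \ {l} ∈ 𝓝[spectrum ℂ T \ {l}] l := self_mem_nhdsWithin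
  have hempty : (spectrum ℂ T \ {l}) ∩ Metric.ball l ε = ∅ := by
    ext μ
    simp only [Set.mem_inter_iff, Set.mem_diff, Set.mem_singleton_iff, Metric.mem_ball,
      Set.mem_empty_iff_false, iff_false, not_and, and_imp]
    intro hμσ hμl hμb
    exact hnotin μ hμl hμb hμσ
  have hmem := Filter.inter_mem hself hball
  rwa [hempty] at hmem

private lemma aspectrum_subset (T : X →L[ℂ] X) : aspectrum T ⊆ spectrum ℂ T := by
  intro z hz
  by_contra hzσ
  rw [spectrum.notMem_iff] at hzσ
  obtain ⟨u, hu⟩ := hzσ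
  apply hz
  refine ⟨(‖((u⁻¹ : (X →L[ℂ] X)ˣ) : X →L[ℂ] X)‖ + 1)⁻¹, by positivity, ?_⟩
  intro x
  have h1 : ((u⁻¹ : (X →L[ℂ] X)ˣ) : X →L[ℂ] X) ((u : X →L[ℂ] X) x) = x := by
    calc ((u⁻¹ : (X →L[ℂ] X)ˣ) : X →L[ℂ] X) ((u : X →L[ℂ] X) x)
        = (((u⁻¹ : (X →L[ℂ] X)ˣ) : X →L[ℂ] X) * (u : X →L[ℂ] X)) x := rfl
      _ = (1 : X →L[ℂ] X) x := by rw [u.inv_mul]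
      _ = x := rfl
  have h2 : ‖x‖ ≤ (‖((u⁻¹ : (X →L[ℂ] X)ˣ) : X →L[ℂ] X)‖ + 1) * ‖(u : X →L[ℂ] X) x‖ := by
    calc ‖x‖ = ‖((u⁻¹ : (X →L[ℂ] X)ˣ) : X →L[ℂ] X) ((u : X →L[ℂ] X) x)‖ := by rw [h1]
      _ ≤ ‖((u⁻¹ : (X →L[ℂ] X)ˣ) : X →L[ℂ] X)‖ * ‖(u : X →L[ℂ] X) x‖ :=
          ContinuousLinearMap.le_opNorm _ _
      _ ≤ (‖((u⁻¹ : (X →L[ℂ] X)ˣ) : X →L[ℂ] X)‖ + 1) * ‖(u : X →L[ℂ] X) x‖ := by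
          apply mul_le_mul_of_nonneg_right _ (norm_nonneg _)
          linarith
  have h3 : (T - z • (1 : X →L[ℂ] X)) x = -((u : X →L[ℂ] X) x) := by
    have h4 : T - z • (1 : X →L[ℂ] X) = -(u : X →L[ℂ] X) := by
      rw [hu, Algebra.algebraMap_eq_smul_one, neg_sub]
    rw [h4, ContinuousLinearMap.neg_apply]
  rw [h3, norm_neg]
  rw [inv_mul_le_iff₀ (by positivity)]
  exact h2

private lemma ball_subset_spectrum_of_not_aspectrum (T : X →L[ℂ] X) {l : ℂ}
    (hla : l ∉ aspectrum T) (hlσ : l ∈ spectrum ℂ T) :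
    ∃ ε > (0 : ℝ), Metric.ball l ε ⊆ spectrum ℂ T := by
  obtain ⟨c, hc, hbb⟩ : ∃ c > (0 : ℝ), ∀ x : X, c * ‖x‖ ≤ ‖(T - l • 1) x‖ := not_not.mp hla
  refine ⟨c / 2, by positivity, ?_⟩
  intro μ hμ
  by_contra hμσ
  rw [Metric.mem_ball] at hμ
  rw [spectrum.notMem_iff] at hμσ
  obtain ⟨u, hu⟩ := hμσ
  have hD0 : (0 : ℝ) ≤ dist μ l := dist_nonneg
  have hcD : (0 : ℝ) < c - dist μ l := by linarith
  have huTμ : T - μ • (1 : X →L[ℂ] X) = -(u : X →L[ℂ] X) := by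
    rw [hu, Algebra.algebraMap_eq_smul_one, neg_sub]
  have hbb2 : ∀ x : X, (c - dist μ l) * ‖x‖ ≤ ‖(u : X →L[ℂ] X) x‖ := by
    intro x
    have h1 : (T - μ • (1 : X →L[ℂ] X)) x = (T - l • (1 : X →L[ℂ] X)) x - (μ - l) • x := by
      rw [ContinuousLinearMap.sub_apply, ContinuousLinearMap.sub_apply,
        ContinuousLinearMap.smul_apply, ContinuousLinearMap.smul_apply,
        ContinuousLinearMap.one_apply, sub_smul]
      abel
    have h2 : ‖(u : X →L[ℂ] X) x‖ = ‖(T - μ • (1 : X →L[ℂ] X)) x‖ := by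
      rw [huTμ, ContinuousLinearMap.neg_apply, norm_neg]
    have h3 : ‖(T - l • (1 : X →L[ℂ] X)) x‖ - ‖(μ - l) • x‖
        ≤ ‖(T - l • (1 : X →L[ℂ] X)) x - (μ - l) • x‖ := norm_sub_norm_le _ _
    have h4 : ‖(μ - l) • x‖ = dist μ l * ‖x‖ := by
      rw [norm_smul, dist_eq_norm]
    have h5 := hbb x
    rw [h2, h1]
    rw [h4] at h3
    nlinarith [norm_nonneg x]
  have h4 : ∀ y : X, (u : X →L[ℂ] X) (((u⁻¹ : (X →L[ℂ] X)ˣ) : X →L[ℂ] X) y) = y := by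
    intro y
    calc (u : X →L[ℂ] X) (((u⁻¹ : (X →L[ℂ] X)ˣ) : X →L[ℂ] X) y)
        = ((u : X →L[ℂ] X) * ((u⁻¹ : (X →L[ℂ] X)ˣ) : X →L[ℂ] X)) y := rfl
      _ = (1 : X →L[ℂ] X) y := by rw [u.mul_inv]
      _ = y := rfl
  have hinvle : ‖((u⁻¹ : (X →L[ℂ] X)ˣ) : X →L[ℂ] X)‖ ≤ (c - dist μ l)⁻¹ := by
    apply ContinuousLinearMap.opNorm_le_bound _ (by positivity)
    intro y
    have h5 := hbb2 (((u⁻¹ : (X →L[ℂ] X)ˣ) : X →L[ℂ] X) y)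
    rw [h4 y] at h5
    have h6 : ‖((u⁻¹ : (X →L[ℂ] X)ˣ) : X →L[ℂ] X) y‖
        = (c - dist μ l)⁻¹ * ((c - dist μ l) * ‖((u⁻¹ : (X →L[ℂ] X)ˣ) : X →L[ℂ] X) y‖) := by
      rw [← mul_assoc, inv_mul_cancel₀ (ne_of_gt hcD), one_mul]
    rw [h6]
    exact mul_le_mul_of_nonneg_left h5 (inv_nonneg.mpr hcD.le)
  have hKpos : 0 < ‖((u⁻¹ : (X →L[ℂ] X)ˣ) : X →L[ℂ] X)‖ := by
    rcases (norm_nonneg ((u⁻¹ : (X →L[ℂ] X)ˣ) : X →L[ℂ] X)).lt_or_eq with h | h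
    · exact h
    · exfalso
      have h0 : ((u⁻¹ : (X →L[ℂ] X)ˣ) : X →L[ℂ] X) = 0 := norm_eq_zero.mp h.symm
      have h1 : (1 : X →L[ℂ] X) = 0 := by
        have h2 := u.inv_mul
        rw [h0, zero_mul] at h2
        exact h2.symm
      have h3 : IsUnit (algebraMap ℂ (X →L[ℂ] X) l - T) := by
        refine ⟨⟨algebraMap ℂ (X →L[ℂ] X) l - T, 0, ?_, ?_⟩, rfl⟩
        · rw [mul_zero, h1]
        · rw [zero_mul, h1]
      exact (spectrum.notMem_iff.mpr h3) hlσ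
  have hKinv : c - dist μ l ≤ ‖((u⁻¹ : (X →L[ℂ] X)ˣ) : X →L[ℂ] X)‖⁻¹ := by
    have h7 : ‖((u⁻¹ : (X →L[ℂ] X)ˣ) : X →L[ℂ] X)‖ * (c - dist μ l) ≤ 1 := by
      have h8 := mul_le_mul_of_nonneg_right hinvle hcD.le
      rwa [inv_mul_cancel₀ (ne_of_gt hcD)] at h8
    rw [← one_div, le_div_iff₀ hKpos]
    nlinarith
  have hnear : ‖(algebraMap ℂ (X →L[ℂ] X) l - T) - (u : X →L[ℂ] X)‖
      < ‖((u⁻¹ : (X →L[ℂ] X)ˣ) : X →L[ℂ] X)‖⁻¹ := by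
    have heq : (algebraMap ℂ (X →L[ℂ] X) l - T) - (u : X →L[ℂ] X)
        = (l - μ) • (1 : X →L[ℂ] X) := by
      rw [hu, Algebra.algebraMap_eq_smul_one, Algebra.algebraMap_eq_smul_one,
        sub_sub_sub_cancel_right, ← sub_smul]
    rw [heq]
    have h8 : ‖(l - μ) • (1 : X →L[ℂ] X)‖ ≤ dist μ l := by
      apply ContinuousLinearMap.opNorm_le_bound _ hD0
      intro y
      rw [ContinuousLinearMap.smul_apply, ContinuousLinearMap.one_apply, norm_smul,
        norm_sub_rev, ← dist_eq_norm]
    calc ‖(l - μ) • (1 : X →L[ℂ] X)‖ ≤ dist μ l := h8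
      _ < c - dist μ l := by linarith
      _ ≤ _ := hKinv
  exact (spectrum.notMem_iff.mpr (Units.ofNearby u _ hnear).isUnit) hlσ

/-- a-polaroid implies `iso σ_a(A) = iso σ(A)`. -/
theorem iso_aspectrum_eq_iso_spectrum_of_aPolaroid (A : X →L[ℂ] X) (hA : APolaroid A) :
    iso (aspectrum A) = iso (spectrum ℂ A) := by
  ext l
  constructor
  · intro hl
    have hp : l ∈ poles A := hA hl
    exact ⟨hp.1, pole_isolated A hp⟩
  · rintro ⟨hlσ, hisol⟩
    have hla : l ∈ aspectrum A := by
      by_contra hla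
      obtain ⟨ε, hε, hball⟩ := ball_subset_spectrum_of_not_aspectrum A hla hlσ
      have h1 : 𝓝[Metric.ball l ε \ {l}] l ≤ 𝓝[spectrum ℂ A \ {l}] l :=
        nhdsWithin_mono l (Set.diff_subset_diff_left hball)
      have h2 : 𝓝[({l}ᶜ : Set ℂ)] l = 𝓝[Metric.ball l ε \ {l}] l := by
        rw [nhdsWithin_restrict' ({l}ᶜ : Set ℂ) (Metric.ball_mem_nhds l hε)]
        congr 1
        rw [Set.diff_eq, Set.inter_comm]
      have h3 : 𝓝[({l}ᶜ : Set ℂ)] l = ⊥ :=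
        bot_unique (h2.le.trans (h1.trans hisol.le))
      exact (NormedField.nhdsNE_neBot l).ne h3
    refine ⟨hla, ?_⟩
    have hsub : aspectrum A \ {l} ⊆ spectrum ℂ A \ {l} :=
      Set.diff_subset_diff_left (aspectrum_subset A)
    exact bot_unique ((nhdsWithin_mono l hsub).trans hisol.le)

end Paper
end
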